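/- arXiv:1109.1619 — 5 statements merged into one kernel-verified Lean document; each statement's English description precedes it below -/
import Mathlib

section
/- Let K and L be nonempty compact convex sets in ℝⁿ (n ≥ 2). Suppose that for every unit vector u ∈ ℝⁿ, the orthogonal projection L_u of L onto the hyperplane u^⊥ contains a translate of the corresponding projection K_u. Then there exists x ∈ ℝⁿ such that K + x ⊆ (n/(n-1))·L. -/
open Set MeasureTheory Pointwise

noncomputable def projSet {n : ℕ} (u : EuclideanSpace ℝ (Fin n))
    (K : Set (EuclideanSpace ℝ (Fin n))) : Set (EuclideanSpace ℝ (Fin n)) :=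
  (fun x => (Submodule.orthogonalProjectionOnto (ℝ ∙ u)ᗮ x : EuclideanSpace ℝ (Fin n))) '' K

open RealInnerProductSpace

variable {E : Type*} [NormedAddCommGroup E] [InnerProductSpace ℝ E]

noncomputable def suppF (S : Set E) (v : E) : ℝ := sSup ((fun k => ⟪k, v⟫) '' S)

lemma suppF_bdd {S : Set E} (hS : IsCompact S) (v : E) :
    BddAbove ((fun k => ⟪k, v⟫) '' S) :=
  (hS.image (continuous_id.inner continuous_const)).bddAbove

lemma le_suppF {S : Set E} (hS : IsCompact S) {k : E} (hk : k ∈ S) (v : E) :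
    ⟪k, v⟫ ≤ suppF S v :=
  le_csSup (suppF_bdd hS v) ⟨k, hk, rfl⟩

lemma suppF_le {S : Set E} (hne : S.Nonempty) {v : E} {t : ℝ}
    (h : ∀ k ∈ S, ⟪k, v⟫ ≤ t) : suppF S v ≤ t :=
  csSup_le (hne.image _) (by rintro x ⟨k, hk, rfl⟩; exact h k hk)

lemma suppF_zero {S : Set E} (hne : S.Nonempty) (hS : IsCompact S) : suppF S (0 : E) = 0 :=
  le_antisymm (suppF_le hne (fun k _ => by simp)) (by
    obtain ⟨k, hk⟩ := hne
    simpa using le_suppF hS hk 0)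

lemma suppF_add {S : Set E} (hne : S.Nonempty) (hS : IsCompact S) (v w : E) :
    suppF S (v + w) ≤ suppF S v + suppF S w :=
  suppF_le hne (fun k hk => by
    rw [inner_add_right]
    exact add_le_add (le_suppF hS hk v) (le_suppF hS hk w))

lemma sSup_mul_nonneg {A : Set ℝ} (hne : A.Nonempty) (hbdd : BddAbove A) {c : ℝ}
    (hc : 0 ≤ c) : sSup ((fun t => c * t) '' A) = c * sSup A :=
  ((monotone_mul_left_of_nonneg hc).map_csSup_of_continuousAt
    ((continuous_mul_left c).continuousAt) hne hbdd).symm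

lemma suppF_smul {S : Set E} (hne : S.Nonempty) (hS : IsCompact S) {c : ℝ} (hc : 0 ≤ c)
    (v : E) : suppF S (c • v) = c * suppF S v := by
  have : (fun k => ⟪k, c • v⟫) '' S = (fun t => c * t) '' ((fun k => ⟪k, v⟫) '' S) := by
    rw [Set.image_image]
    exact Set.image_congr (fun k _ => real_inner_smul_right k v c)
  rw [suppF, this, sSup_mul_nonneg (hne.image _) (suppF_bdd hS v) hc]; rfl

lemma suppF_smul_set {S : Set E} (hne : S.Nonempty) (hS : IsCompact S) {c : ℝ} (hc : 0 ≤ c)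
    (v : E) : suppF (c • S) v = c * suppF S v := by
  have : (fun k => ⟪k, v⟫) '' (c • S) = (fun t => c * t) '' ((fun k => ⟪k, v⟫) '' S) := by
    rw [← Set.image_smul, Set.image_image, Set.image_image]
    exact Set.image_congr (fun k _ => real_inner_smul_left k v c)
  rw [suppF, this, sSup_mul_nonneg (hne.image _) (suppF_bdd hS v) hc]; rfl

lemma suppF_sum {S : Set E} (hne : S.Nonempty) (hS : IsCompact S)
    {ι : Type*} (s : Finset ι) (f : ι → E) :
    suppF S (∑ i ∈ s, f i) ≤ ∑ i ∈ s, suppF S (f i) := by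
  classical
  induction s using Finset.cons_induction with
  | empty => simp [suppF_zero hne hS]
  | cons i s his ih =>
      rw [Finset.sum_cons, Finset.sum_cons]
      exact (suppF_add hne hS _ _).trans (by gcongr)

lemma mem_of_suppF [CompleteSpace E] {S : Set E} (hne : S.Nonempty) (hcv : Convex ℝ S)
    (hcl : IsClosed S) {p : E} (h : ∀ v, ⟪p, v⟫ ≤ suppF S v) : p ∈ S := by
  by_contra hp
  obtain ⟨f, u, hfs, hfp⟩ := geometric_hahn_banach_closed_point hcv hcl hp
  set v := (InnerProductSpace.toDual ℝ E).symm f with hv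
  have hvx : ∀ x : E, ⟪v, x⟫ = f x := fun x => InnerProductSpace.toDual_symm_apply
  have h1 : suppF S v ≤ u :=
    suppF_le hne (fun k hk => by rw [real_inner_comm, hvx]; exact (hfs k hk).le)
  have h2 : ⟪p, v⟫ = f p := by rw [real_inner_comm, hvx]
  have := h v
  linarith

lemma PT {n : ℕ} {K L : Set (EuclideanSpace ℝ (Fin n))}
    (hKne : K.Nonempty) (hLcpt : IsCompact L)
    {u : EuclideanSpace ℝ (Fin n)}
    (hcov : ∃ w ∈ (ℝ ∙ u)ᗮ, (fun y => y + w) '' projSet u K ⊆ projSet u L) :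
    ∃ w : EuclideanSpace ℝ (Fin n), ∀ y, ⟪u, y⟫ = 0 →
      suppF K y + ⟪w, y⟫ ≤ suppF L y := by
  obtain ⟨w, _, hsub⟩ := hcov
  refine ⟨w, fun y hy => ?_⟩
  have hyV : y ∈ (ℝ ∙ u)ᗮ := Submodule.mem_orthogonal_singleton_iff_inner_right.mpr hy
  have key : ∀ m : EuclideanSpace ℝ (Fin n),
      ⟪(Submodule.orthogonalProjectionOnto (ℝ ∙ u)ᗮ m : EuclideanSpace ℝ (Fin n)), y⟫ = ⟪m, y⟫ := by
    intro m
    have hmem := Submodule.sub_starProjection_mem_orthogonal (K := (ℝ ∙ u)ᗮ) m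
    have h0 : ⟪m - (Submodule.orthogonalProjectionOnto (ℝ ∙ u)ᗮ m : EuclideanSpace ℝ (Fin n)), y⟫ = 0 := by
      rw [real_inner_comm]
      exact Submodule.inner_right_of_mem_orthogonal hyV hmem
    rw [inner_sub_left] at h0
    linarith
  have main : ∀ k ∈ K, ⟪k, y⟫ ≤ suppF L y - ⟪w, y⟫ := by
    intro k hk
    have hpk : (Submodule.orthogonalProjectionOnto (ℝ ∙ u)ᗮ k : EuclideanSpace ℝ (Fin n)) + w
        ∈ projSet u L := hsub ⟨_, ⟨k, hk, rfl⟩, rfl⟩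
    obtain ⟨l, hl, hleq⟩ := hpk
    have : ⟪(Submodule.orthogonalProjectionOnto (ℝ ∙ u)ᗮ k : EuclideanSpace ℝ (Fin n)) + w, y⟫
        = ⟪l, y⟫ := by rw [← hleq]; exact key l
    rw [inner_add_left, key k] at this
    have := le_suppF hLcpt hl y
    linarith
  have := suppF_le hKne main
  linarith

lemma exists_unit_orth {n : ℕ} (hn : 1 ≤ n) (s : Finset ℕ)
    (z : ℕ → EuclideanSpace ℝ (Fin n)) (hcard : s.card ≤ n)
    (hsum : ∑ i ∈ s, z i = 0) :
    ∃ u : EuclideanSpace ℝ (Fin n), ‖u‖ = 1 ∧ ∀ i ∈ s, ⟪u, z i⟫ = 0 := by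
  classical
  rcases s.eq_empty_or_nonempty with rfl | ⟨i₀, hi₀⟩
  · refine ⟨EuclideanSpace.single ⟨0, by omega⟩ 1, by simp, by simp⟩
  · set S := Submodule.span ℝ (((s.erase i₀).image z : Finset _) : Set (EuclideanSpace ℝ (Fin n)))
    have hzS : ∀ i ∈ s, z i ∈ S := by
      intro i hi
      rcases eq_or_ne i i₀ with rfl | hne
      · have h1 : z i = -∑ j ∈ s.erase i, z j := by
          rw [← Finset.add_sum_erase s z hi] at hsum
          linear_combination (norm := module) hsum
        rw [h1]
        exact neg_mem (Submodule.sum_mem _ (fun j hj => Submodule.subset_span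
          (by simp only [Finset.coe_image, Set.mem_image, Finset.mem_coe]; exact ⟨j, hj, rfl⟩)))
      · exact Submodule.subset_span
          (by simp only [Finset.coe_image, Set.mem_image, Finset.mem_coe]
              exact ⟨i, Finset.mem_erase.mpr ⟨hne, hi⟩, rfl⟩)
    have hrank : Module.finrank ℝ S < n := by
      have h1 : Module.finrank ℝ S ≤ ((s.erase i₀).image z).card :=
        finrank_span_finset_le_card ((s.erase i₀).image z)
      have h2 : ((s.erase i₀).image z).card ≤ (s.erase i₀).card := Finset.card_image_le
      have h3 : (s.erase i₀).card = s.card - 1 := Finset.card_erase_of_mem hi₀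
      have h4 : 1 ≤ s.card := Finset.card_pos.mpr ⟨i₀, hi₀⟩
      omega
    have hStop : S ≠ ⊤ := by
      intro h
      rw [h, finrank_top, finrank_euclideanSpace_fin] at hrank
      omega
    have hbot : Sᗮ ≠ ⊥ := fun h => hStop (Submodule.orthogonal_eq_bot_iff.mp h)
    obtain ⟨u₀, hu₀S, hu₀⟩ := Submodule.exists_mem_ne_zero_of_ne_bot hbot
    refine ⟨‖u₀‖⁻¹ • u₀, norm_smul_inv_norm hu₀, fun i hi => ?_⟩
    have : ⟪u₀, z i⟫ = 0 := by
      rw [real_inner_comm]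
      exact Submodule.inner_right_of_mem_orthogonal (hzS i hi) hu₀S
    rw [real_inner_smul_left, this, mul_zero]

lemma HYP {n : ℕ} (hn : 1 ≤ n) {K L : Set (EuclideanSpace ℝ (Fin n))}
    (hKne : K.Nonempty) (hLcpt : IsCompact L)
    (hcov : ∀ u : EuclideanSpace ℝ (Fin n), ‖u‖ = 1 →
      ∃ w ∈ (ℝ ∙ u)ᗮ, (fun y => y + w) '' projSet u K ⊆ projSet u L)
    (s : Finset ℕ) (z : ℕ → EuclideanSpace ℝ (Fin n)) (hcard : s.card ≤ n)
    (hsum : ∑ i ∈ s, z i = 0) :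
    ∑ i ∈ s, suppF K (z i) ≤ ∑ i ∈ s, suppF L (z i) := by
  obtain ⟨u, hu, horth⟩ := exists_unit_orth hn s z hcard hsum
  obtain ⟨w, hw⟩ := PT hKne hLcpt (hcov u hu)
  have h1 : ∀ i ∈ s, suppF K (z i) ≤ suppF L (z i) - ⟪w, z i⟫ := by
    intro i hi
    have := hw (z i) (horth i hi)
    linarith
  calc ∑ i ∈ s, suppF K (z i) ≤ ∑ i ∈ s, (suppF L (z i) - ⟪w, z i⟫) :=
        Finset.sum_le_sum h1
    _ = ∑ i ∈ s, suppF L (z i) - ⟪w, ∑ i ∈ s, z i⟫ := by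
        rw [Finset.sum_sub_distrib, inner_sum]
    _ = ∑ i ∈ s, suppF L (z i) := by rw [hsum, inner_zero_right, sub_zero]

open Finset in
lemma sum_erase_comm {M : Type*} [AddCommMonoid M] (s : Finset ℕ) (F : ℕ → ℕ → M) :
    ∑ i ∈ s, ∑ j ∈ s.erase i, F i j = ∑ j ∈ s, ∑ i ∈ s.erase j, F i j := by
  classical
  have key : ∀ (G : ℕ → ℕ → M), ∀ i ∈ s, ∑ j ∈ s.erase i, G i j
      = ∑ j ∈ s, if j = i then 0 else G i j := by
    intro G i hi
    rw [← Finset.sum_erase s (by simp : (if i = i then (0:M) else G i i) = 0)]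
    exact Finset.sum_congr rfl (fun j hj => by rw [if_neg (Finset.ne_of_mem_erase hj)])
  rw [Finset.sum_congr rfl (key F),
    Finset.sum_congr rfl (fun j hj => key (fun a b => F b a) j hj), Finset.sum_comm]
  exact Finset.sum_congr rfl fun j _ => Finset.sum_congr rfl fun i _ => by
    simp only [eq_comm]

lemma KEY {n : ℕ} (hn : 2 ≤ n) {K L : Set (EuclideanSpace ℝ (Fin n))}
    (hKne : K.Nonempty) (hKcpt : IsCompact K)
    (hLne : L.Nonempty) (hLcpt : IsCompact L)
    (hcov : ∀ u : EuclideanSpace ℝ (Fin n), ‖u‖ = 1 →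
      ∃ w ∈ (ℝ ∙ u)ᗮ, (fun y => y + w) '' projSet u K ⊆ projSet u L)
    (s : Finset ℕ) (z : ℕ → EuclideanSpace ℝ (Fin n)) (hcard : s.card = n + 1)
    (hsum : ∑ i ∈ s, z i = 0) :
    ∑ i ∈ s, suppF K (z i) ≤ ((n : ℝ) / ((n : ℝ) - 1)) * ∑ i ∈ s, suppF L (z i) := by
  classical
  have hnR : (2 : ℝ) ≤ (n : ℝ) := by exact_mod_cast hn
  have hden : (n : ℝ) ^ 2 - 1 ≠ 0 := by nlinarith
  set b : ℝ := ((n : ℝ) ^ 2 - 1)⁻¹ with hbdef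
  set a : ℝ := (n : ℝ) * b with hadef
  have hpos : (0:ℝ) < (n : ℝ) ^ 2 - 1 := by nlinarith
  have hb : 0 ≤ b := by
    rw [hbdef]
    exact (inv_nonneg).mpr hpos.le
  have ha : 0 ≤ a := by positivity
  have hab : (n : ℝ) * a - b = 1 := by
    have : (n : ℝ) * a - b = ((n : ℝ) ^ 2 - 1) * ((n : ℝ) ^ 2 - 1)⁻¹ := by
      rw [hadef, hbdef]; ring
    rw [this, mul_inv_cancel₀ hden]
  have hab2 : (n : ℝ) * b - a = 0 := by rw [hadef]; ring
  have herase_card : ∀ i ∈ s, (s.erase i).card = n := by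
    intro i hi
    rw [Finset.card_erase_of_mem hi, hcard]
    omega
  have herase_sum : ∀ i ∈ s, ∑ j ∈ s.erase i, z j = -z i := by
    intro i hi
    rw [← Finset.add_sum_erase s z hi] at hsum
    linear_combination (norm := module) hsum
  -- Step 1 : z i is the sum of the y_{ij}
  have hrep : ∀ i ∈ s, z i = ∑ j ∈ s.erase i, (a • z i + b • z j) := by
    intro i hi
    rw [Finset.sum_add_distrib, Finset.sum_const, ← Finset.smul_sum, herase_sum i hi,
      herase_card i hi, ← Nat.cast_smul_eq_nsmul ℝ]
    have hinv : ((n:ℝ)^2 - 1) * ((n:ℝ)^2 - 1)⁻¹ = 1 := mul_inv_cancel₀ hden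
    match_scalars
    linear_combination -hinv
  -- Step 2 : per j, the family i ↦ y_{ij} is balanced
  have hbal : ∀ j ∈ s, ∑ i ∈ s.erase j, (a • z i + b • z j) = 0 := by
    intro j hj
    rw [Finset.sum_add_distrib, Finset.sum_const, ← Finset.smul_sum, herase_sum j hj,
      herase_card j hj, ← Nat.cast_smul_eq_nsmul ℝ]
    match_scalars
    linear_combination hab2
  -- subadditivity step
  have step1 : ∑ i ∈ s, suppF K (z i)
      ≤ ∑ i ∈ s, ∑ j ∈ s.erase i, suppF K (a • z i + b • z j) := by
    refine Finset.sum_le_sum (fun i hi => ?_)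
    calc suppF K (z i) = suppF K (∑ j ∈ s.erase i, (a • z i + b • z j)) := by
          rw [← hrep i hi]
      _ ≤ ∑ j ∈ s.erase i, suppF K (a • z i + b • z j) :=
          suppF_sum hKne hKcpt _ _
  -- swap and apply hyperplane inequality
  have step2 : ∑ i ∈ s, ∑ j ∈ s.erase i, suppF K (a • z i + b • z j)
      ≤ ∑ j ∈ s, ∑ i ∈ s.erase j, suppF L (a • z i + b • z j) := by
    rw [sum_erase_comm s (fun i j => suppF K (a • z i + b • z j))]
    refine Finset.sum_le_sum (fun j hj => ?_)
    exact HYP (by omega) hKne hLcpt hcov (s.erase j) (fun i => a • z i + b • z j)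
      (by rw [herase_card j hj]) (hbal j hj)
  -- estimate each suppF L term
  have step3 : ∑ j ∈ s, ∑ i ∈ s.erase j, suppF L (a • z i + b • z j)
      ≤ ∑ j ∈ s, ∑ i ∈ s.erase j, (a * suppF L (z i) + b * suppF L (z j)) := by
    refine Finset.sum_le_sum (fun j _ => Finset.sum_le_sum (fun i _ => ?_))
    calc suppF L (a • z i + b • z j) ≤ suppF L (a • z i) + suppF L (b • z j) :=
          suppF_add hLne hLcpt _ _
      _ = a * suppF L (z i) + b * suppF L (z j) := by
          rw [suppF_smul hLne hLcpt ha, suppF_smul hLne hLcpt hb]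
  -- final computation
  set T := ∑ i ∈ s, suppF L (z i) with hT
  have herase_suppL : ∀ j ∈ s, ∑ i ∈ s.erase j, suppF L (z i) = T - suppF L (z j) := by
    intro j hj
    have := Finset.add_sum_erase s (fun i => suppF L (z i)) hj
    linarith [this]
  have step4 : ∑ j ∈ s, ∑ i ∈ s.erase j, (a * suppF L (z i) + b * suppF L (z j))
      = ((n : ℝ) * (a + b)) * T := by
    have : ∀ j ∈ s, ∑ i ∈ s.erase j, (a * suppF L (z i) + b * suppF L (z j))
        = a * (T - suppF L (z j)) + (n : ℝ) * (b * suppF L (z j)) := by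
      intro j hj
      rw [Finset.sum_add_distrib, ← Finset.mul_sum, herase_suppL j hj, Finset.sum_const,
        herase_card j hj, nsmul_eq_mul]
    rw [Finset.sum_congr rfl this, Finset.sum_add_distrib, ← Finset.mul_sum, ← Finset.mul_sum,
      Finset.sum_sub_distrib, Finset.sum_const, hcard, nsmul_eq_mul, ← hT, ← Finset.mul_sum,
      ← hT]
    push_cast
    ring
  have hfinal : (n : ℝ) * (a + b) = (n : ℝ) / ((n : ℝ) - 1) := by
    have h1 : (n : ℝ) - 1 ≠ 0 := by nlinarith
    have h2 : ((n : ℝ) - 1) * ((n : ℝ) + 1) = (n : ℝ) ^ 2 - 1 := by ring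
    rw [hadef, hbdef, eq_div_iff h1]
    field_simp [hden]
    ring
  calc ∑ i ∈ s, suppF K (z i)
      ≤ ∑ j ∈ s, ∑ i ∈ s.erase j, (a * suppF L (z i) + b * suppF L (z j)) :=
        (step1.trans step2).trans step3
    _ = ((n : ℝ) / ((n : ℝ) - 1)) * T := by rw [step4, hfinal]

lemma BAL {n : ℕ} (hn : 2 ≤ n) {K L : Set (EuclideanSpace ℝ (Fin n))}
    (hKne : K.Nonempty) (hKcpt : IsCompact K)
    (hLne : L.Nonempty) (hLcpt : IsCompact L)
    (hcov : ∀ u : EuclideanSpace ℝ (Fin n), ‖u‖ = 1 →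
      ∃ w ∈ (ℝ ∙ u)ᗮ, (fun y => y + w) '' projSet u K ⊆ projSet u L)
    (m : ℕ) : ∀ (s : Finset ℕ) (z : ℕ → EuclideanSpace ℝ (Fin n)), s.card = m →
    ∑ i ∈ s, z i = 0 →
    ∑ i ∈ s, suppF K (z i) ≤ ((n : ℝ) / ((n : ℝ) - 1)) * ∑ i ∈ s, suppF L (z i) := by
  classical
  induction m using Nat.strong_induction_on with
  | _ m IH =>
  intro s z hcard hsum
  have hc1 : (1 : ℝ) ≤ (n : ℝ) / ((n : ℝ) - 1) := by
    have h2 : (2:ℝ) ≤ (n : ℝ) := by exact_mod_cast hn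
    rw [le_div_iff₀ (by linarith)]
    linarith
  have hTnn : 0 ≤ ∑ i ∈ s, suppF L (z i) := by
    have h1 := suppF_sum hLne hLcpt s z
    rw [hsum, suppF_zero hLne hLcpt] at h1
    exact h1
  rcases le_or_gt s.card n with hle | hgt
  · -- small case : all vectors lie in a hyperplane
    have h1 := HYP (by omega) hKne hLcpt hcov s z hle hsum
    nlinarith
  rcases eq_or_lt_of_le (Nat.succ_le_of_lt hgt) with heq | hgt2
  · -- exactly n+1 vectors
    exact KEY hn hKne hKcpt hLne hLcpt hcov s z heq.symm hsum
  -- splitting case : at least n+2 vectors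
  have hsne : s.Nonempty := Finset.card_pos.mp (by omega)
  obtain ⟨i₀, hi₀⟩ := hsne
  have hdep : ¬ LinearIndependent ℝ (fun i : (s.erase i₀ : Finset ℕ) => z i) := by
    intro h
    have hcle := h.fintype_card_le_finrank
    rw [Fintype.card_coe, finrank_euclideanSpace_fin,
      Finset.card_erase_of_mem hi₀] at hcle
    omega
  obtain ⟨g, hgsum, i₁, hgi₁⟩ := Fintype.not_linearIndependent_iff.mp hdep
  set μ : ℕ → ℝ := fun i => if h : i ∈ s.erase i₀ then g ⟨i, h⟩ else 0 with hμdef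
  have hμi₀ : μ i₀ = 0 := by simp [hμdef]
  have hμsum : ∑ i ∈ s, μ i • z i = 0 := by
    rw [← Finset.add_sum_erase s (fun i => μ i • z i) hi₀, hμi₀, zero_smul, zero_add]
    have h1 : ∑ i ∈ s.erase i₀, μ i • z i = ∑ i ∈ (s.erase i₀).attach, g i • z ↑i := by
      rw [← Finset.sum_attach (s.erase i₀) (fun i => μ i • z i)]
      refine Finset.sum_congr rfl (fun i _ => ?_)
      simp only [hμdef]
      rw [dif_pos i.2]
    rw [h1, ← Finset.univ_eq_attach]
    exact hgsum
  have hμne : ∃ i ∈ s, μ i ≠ 0 := by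
    refine ⟨i₁, Finset.mem_of_mem_erase i₁.2, ?_⟩
    simp only [hμdef]
    rw [dif_pos i₁.2]
    exact hgi₁
  set Mmax := s.sup' ⟨i₀, hi₀⟩ μ with hMmax
  set Mmin := s.inf' ⟨i₀, hi₀⟩ μ with hMmin
  have hminmax : Mmin < Mmax := by
    obtain ⟨i, hi, hμi⟩ := hμne
    rcases lt_or_gt_of_ne hμi with hneg | hposi
    · calc Mmin ≤ μ i := Finset.inf'_le _ hi
        _ < 0 := hneg
        _ = μ i₀ := hμi₀.symm
        _ ≤ Mmax := Finset.le_sup' _ hi₀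
    · calc Mmin ≤ μ i₀ := Finset.inf'_le _ hi₀
        _ = 0 := hμi₀
        _ < μ i := hposi
        _ ≤ Mmax := Finset.le_sup' _ hi
  set α : ℕ → ℝ := fun i => (μ i - Mmin) / (Mmax - Mmin) with hαdef
  have hα0 : ∀ i ∈ s, 0 ≤ α i := fun i hi =>
    div_nonneg (sub_nonneg.mpr (Finset.inf'_le _ hi)) (by linarith)
  have hα1 : ∀ i ∈ s, α i ≤ 1 := fun i hi =>
    (div_le_one (by linarith)).mpr (by
      have := Finset.le_sup' μ hi
      linarith)
  have hαsum : ∑ i ∈ s, α i • z i = 0 := by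
    have hrw : ∀ i ∈ s, α i • z i
        = (Mmax - Mmin)⁻¹ • (μ i • z i) - ((Mmax - Mmin)⁻¹ * Mmin) • z i := by
      intro i _
      rw [hαdef]
      match_scalars
      rw [sub_div]
      ring
    rw [Finset.sum_congr rfl hrw, Finset.sum_sub_distrib, ← Finset.smul_sum,
      ← Finset.smul_sum, hμsum, hsum, smul_zero, smul_zero, sub_zero]
  obtain ⟨imin, himin, himineq⟩ := Finset.exists_mem_eq_inf' ⟨i₀, hi₀⟩ μ
  obtain ⟨imax, himax, himaxeq⟩ := Finset.exists_mem_eq_sup' ⟨i₀, hi₀⟩ μ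
  have hαmin : α imin = 0 := by rw [hαdef]; simp [← himineq, hMmin]
  have hαmax : α imax = 1 := by
    rw [hαdef]
    rw [div_eq_one_iff_eq (by linarith)]
    rw [← himaxeq]
  set s₁ := s.filter (fun i => α i ≠ 0) with hs₁
  set s₂ := s.filter (fun i => α i ≠ 1) with hs₂
  have hs₁card : s₁.card < m := by
    rw [← hcard]
    refine Finset.card_lt_card ⟨Finset.filter_subset _ _, fun hsub => ?_⟩
    have := hsub himin
    rw [hs₁, Finset.mem_filter] at this
    exact this.2 hαmin
  have hs₂card : s₂.card < m := by
    rw [← hcard]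
    refine Finset.card_lt_card ⟨Finset.filter_subset _ _, fun hsub => ?_⟩
    have := hsub himax
    rw [hs₂, Finset.mem_filter] at this
    exact this.2 hαmax
  have hsum₁ : ∑ i ∈ s₁, α i • z i = 0 := by
    rw [hs₁, Finset.sum_filter_of_ne (fun i _ h => by
      intro h0; exact h (by rw [h0, zero_smul]))]
    exact hαsum
  have hsum₂ : ∑ i ∈ s₂, (1 - α i) • z i = 0 := by
    rw [hs₂, Finset.sum_filter_of_ne (fun i _ h => by
      intro h0; exact h (by rw [h0, sub_self, zero_smul]))]
    have : ∀ i ∈ s, (1 - α i) • z i = z i - α i • z i := by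
      intro i _
      rw [sub_smul, one_smul]
    rw [Finset.sum_congr rfl this, Finset.sum_sub_distrib, hsum, hαsum, sub_zero]
  have ih₁ := IH s₁.card hs₁card s₁ (fun i => α i • z i) rfl hsum₁
  have ih₂ := IH s₂.card hs₂card s₂ (fun i => (1 - α i) • z i) rfl hsum₂
  -- reassemble
  have hsplit : ∀ (S : Set (EuclideanSpace ℝ (Fin n))), S.Nonempty → IsCompact S →
      ∑ i ∈ s, suppF S (z i)
      = ∑ i ∈ s₁, suppF S (α i • z i) + ∑ i ∈ s₂, suppF S ((1 - α i) • z i) := by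
    intro S hSne hScpt
    have h1 : ∑ i ∈ s₁, suppF S (α i • z i) = ∑ i ∈ s, suppF S (α i • z i) := by
      rw [hs₁]
      refine Finset.sum_filter_of_ne (fun i hi h => ?_)
      intro h0
      rw [h0, zero_smul, suppF_zero hSne hScpt] at h
      exact h rfl
    have h2 : ∑ i ∈ s₂, suppF S ((1 - α i) • z i)
        = ∑ i ∈ s, suppF S ((1 - α i) • z i) := by
      rw [hs₂]
      refine Finset.sum_filter_of_ne (fun i hi h => ?_)
      intro h0
      rw [h0, sub_self, zero_smul, suppF_zero hSne hScpt] at h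
      exact h rfl
    rw [h1, h2, ← Finset.sum_add_distrib]
    refine Finset.sum_congr rfl (fun i hi => ?_)
    rw [suppF_smul hSne hScpt (hα0 i hi), suppF_smul hSne hScpt (by linarith [hα1 i hi])]
    ring
  rw [hsplit K hKne hKcpt, hsplit L hLne hLcpt, mul_add]
  exact add_le_add ih₁ ih₂

/-- If every hyperplane shadow of `L` contains a translate of the
corresponding shadow of `K`, then a translate of `K` lies in `(n/(n-1)) • L`. -/
theorem shadow_covering_containment {n : ℕ} (hn : 2 ≤ n)
    (K L : Set (EuclideanSpace ℝ (Fin n)))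
    (hKne : K.Nonempty) (hKcpt : IsCompact K) (hKcv : Convex ℝ K)
    (hLne : L.Nonempty) (hLcpt : IsCompact L) (hLcv : Convex ℝ L)
    (hcov : ∀ u : EuclideanSpace ℝ (Fin n), ‖u‖ = 1 →
      ∃ w ∈ (ℝ ∙ u)ᗮ, (fun y => y + w) '' projSet u K ⊆ projSet u L) :
    ∃ x : EuclideanSpace ℝ (Fin n),
      (fun y => y + x) '' K ⊆ ((n : ℝ) / ((n : ℝ) - 1)) • L := by
  classical
  set c : ℝ := (n : ℝ) / ((n : ℝ) - 1) with hcdef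
  have h2 : (2:ℝ) ≤ (n : ℝ) := by exact_mod_cast hn
  have hc0 : 0 ≤ c := by
    rw [hcdef]
    exact div_nonneg (by linarith) (by linarith)
  set gfun : EuclideanSpace ℝ (Fin n) → ℝ := fun v => c * suppF L v - suppF K v with hgdef
  -- balanced inequality, Fin-tuple version
  have bal0 : ∀ (m : ℕ) (z : Fin m → EuclideanSpace ℝ (Fin n)), (∑ i, z i) = 0 → 0 ≤ ∑ i, gfun (z i) := by
    intro m z hz
    set y : ℕ → EuclideanSpace ℝ (Fin n) := fun i => if h : i < m then z ⟨i, h⟩ else 0 with hydef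
    have hyz : ∀ i : Fin m, y i = z i := by
      intro i
      simp only [hydef]
      rw [dif_pos i.2]
    have hsum : ∑ i ∈ Finset.range m, y i = 0 := by
      rw [← Fin.sum_univ_eq_sum_range]
      rw [Finset.sum_congr rfl (fun i _ => hyz i)]
      exact hz
    have := BAL hn hKne hKcpt hLne hLcpt hcov (Finset.range m).card (Finset.range m) y rfl hsum
    have hK' : ∑ i ∈ Finset.range m, suppF K (y i) = ∑ i : Fin m, suppF K (z i) := by
      rw [← Fin.sum_univ_eq_sum_range (fun i => suppF K (y i)) m]
      exact Finset.sum_congr rfl (fun i _ => by rw [hyz i])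
    have hL' : ∑ i ∈ Finset.range m, suppF L (y i) = ∑ i : Fin m, suppF L (z i) := by
      rw [← Fin.sum_univ_eq_sum_range (fun i => suppF L (y i)) m]
      exact Finset.sum_congr rfl (fun i _ => by rw [hyz i])
    rw [hK', hL'] at this
    have hexp : ∑ i : Fin m, gfun (z i)
        = c * ∑ i : Fin m, suppF L (z i) - ∑ i : Fin m, suppF K (z i) := by
      rw [hgdef, Finset.sum_sub_distrib, Finset.mul_sum]
    rw [hexp]
    linarith
  -- the decomposition set
  set D : EuclideanSpace ℝ (Fin n) → Set ℝ := fun v =>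
    {t | ∃ (m : ℕ) (z : Fin m → EuclideanSpace ℝ (Fin n)), (∑ i, z i) = v ∧ t = ∑ i, gfun (z i)} with hDdef
  have hDne : ∀ v, (D v).Nonempty := by
    intro v
    exact ⟨gfun v, 1, fun _ => v, by simp, by simp⟩
  have hDlb : ∀ v, ∀ t ∈ D v, -gfun (-v) ≤ t := by
    rintro v t ⟨m, z, hzsum, rfl⟩
    have h1 : (∑ i, Fin.snoc z (-v) i) = 0 := by
      rw [Fin.sum_univ_castSucc]
      simp only [Fin.snoc_castSucc, Fin.snoc_last]
      rw [hzsum]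
      abel
    have h2 := bal0 (m+1) (Fin.snoc z (-v)) h1
    rw [Fin.sum_univ_castSucc] at h2
    simp only [Fin.snoc_castSucc, Fin.snoc_last] at h2
    linarith
  have hDbdd : ∀ v, BddBelow (D v) := fun v => ⟨-gfun (-v), fun t ht => hDlb v t ht⟩
  set N : EuclideanSpace ℝ (Fin n) → ℝ := fun v => sInf (D v) with hNdef
  have hNle : ∀ v, N v ≤ gfun v := by
    intro v
    exact csInf_le (hDbdd v) ⟨1, fun _ => v, by simp, by simp⟩
  have hN0 : 0 ≤ N 0 := by
    refine le_csInf (hDne 0) ?_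
    rintro t ⟨m, z, hzsum, rfl⟩
    exact bal0 m z hzsum
  have hNadd : ∀ v w, N (v + w) ≤ N v + N w := by
    intro v w
    have key : ∀ t₁ ∈ D v, ∀ t₂ ∈ D w, N (v + w) ≤ t₁ + t₂ := by
      rintro t₁ ⟨m₁, z₁, hs₁, rfl⟩ t₂ ⟨m₂, z₂, hs₂, rfl⟩
      refine csInf_le (hDbdd _) ⟨m₁ + m₂, Fin.append z₁ z₂, ?_, ?_⟩
      · rw [Fin.sum_univ_add]
        simp only [Fin.append_left, Fin.append_right]
        rw [hs₁, hs₂]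
      · rw [Fin.sum_univ_add]
        simp only [Fin.append_left, Fin.append_right]
    have h1 : ∀ t₂ ∈ D w, N (v + w) - t₂ ≤ N v := by
      intro t₂ h₂
      refine le_csInf (hDne v) (fun t₁ h₁ => ?_)
      have := key t₁ h₁ t₂ h₂
      linarith
    have h2 : N (v + w) - N v ≤ N w := by
      refine le_csInf (hDne w) (fun t₂ h₂ => ?_)
      have := h1 t₂ h₂
      linarith
    linarith
  have hghom : ∀ (r : ℝ), 0 ≤ r → ∀ w : EuclideanSpace ℝ (Fin n),
      gfun (r • w) = r * gfun w := by
    intro r hr w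
    rw [hgdef]
    simp only
    rw [suppF_smul hLne hLcpt hr, suppF_smul hKne hKcpt hr]
    ring
  have hNhom : ∀ r : ℝ, 0 < r → ∀ v, N (r • v) = r * N v := by
    intro r hr v
    have hDeq : D (r • v) = (fun t => r * t) '' D v := by
      ext t
      constructor
      · rintro ⟨m, z, hzsum, rfl⟩
        refine ⟨∑ i, gfun (r⁻¹ • z i), ⟨m, fun i => r⁻¹ • z i, ?_, rfl⟩, ?_⟩
        · rw [← Finset.smul_sum, hzsum, smul_smul, inv_mul_cancel₀ hr.ne', one_smul]
        · show r * (∑ i, gfun (r⁻¹ • z i)) = ∑ i, gfun (z i)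
          rw [Finset.mul_sum]
          refine Finset.sum_congr rfl (fun i _ => ?_)
          rw [← hghom r hr.le, smul_smul, mul_inv_cancel₀ hr.ne', one_smul]
      · rintro ⟨t', ⟨m, z, hzsum, rfl⟩, rfl⟩
        refine ⟨m, fun i => r • z i, ?_, ?_⟩
        · rw [← Finset.smul_sum, hzsum]
        · show r * (∑ i, gfun (z i)) = ∑ i, gfun (r • z i)
          rw [Finset.mul_sum]
          refine Finset.sum_congr rfl (fun i _ => ?_)
          rw [hghom r hr.le]
    rw [hNdef]
    simp only
    rw [hDeq]
    exact ((monotone_mul_left_of_nonneg hr.le).map_csInf_of_continuousAt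
      ((continuous_mul_left r).continuousAt) (hDne v) (hDbdd v)).symm
  -- Hahn–Banach
  set f : EuclideanSpace ℝ (Fin n) →ₗ.[ℝ] ℝ := ⟨⊥, 0⟩ with hfdef
  have hf : ∀ x : f.domain, f x ≤ N x := by
    intro x
    have hx0 : (x : EuclideanSpace ℝ (Fin n)) = 0 := x.2
    have : f x = 0 := rfl
    rw [this, hx0]
    exact hN0
  obtain ⟨φ, -, hφ⟩ := exists_extension_of_le_sublinear f N hNhom hNadd hf
  have hφg : ∀ v, φ v ≤ gfun v := fun v => (hφ v).trans (hNle v)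
  -- the translation vector
  set x : EuclideanSpace ℝ (Fin n) := (InnerProductSpace.toDual ℝ (EuclideanSpace ℝ (Fin n))).symm (LinearMap.toContinuousLinearMap φ)
    with hxdef
  have hx : ∀ v : EuclideanSpace ℝ (Fin n), ⟪x, v⟫ = φ v := by
    intro v
    rw [hxdef]
    exact InnerProductSpace.toDual_symm_apply
  refine ⟨x, ?_⟩
  rintro _ ⟨k, hk, rfl⟩
  have hMne : (c • L).Nonempty := hLne.smul_set
  have hMcv : Convex ℝ (c • L) := hLcv.smul c
  have hMcl : IsClosed (c • L) := (hLcpt.smul c).isClosed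
  refine mem_of_suppF hMne hMcv hMcl (fun v => ?_)
  have h1 : suppF (c • L) v = c * suppF L v := suppF_smul_set hLne hLcpt hc0 v
  have h2 : ⟪k + x, v⟫ = ⟪k, v⟫ + ⟪x, v⟫ := inner_add_left k x v
  have h3 : ⟪k, v⟫ ≤ suppF K v := le_suppF hKcpt hk v
  have h4 := hφg v
  rw [hgdef] at h4
  simp only at h4
  rw [h1, h2, hx v]
  linarith
end

section
/- Let K be a nonempty compact convex set in ℝⁿ (n ≥ 1). Then the set −n·K = {−n·x : x ∈ K} contains a translate of K; that is, there exists v ∈ ℝⁿ with K + v ⊆ −n·K. -/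
open Set MeasureTheory Pointwise

private lemma conv_image {V : Type*} [AddCommGroup V] [Module ℝ V] {K : Set V}
    (hK : Convex ℝ K) (s t : ℝ) (x : V) :
    Convex ℝ ((fun y => s • (t • y + x)) '' K) := by
  rintro _ ⟨y₁, hy₁, rfl⟩ _ ⟨y₂, hy₂, rfl⟩ a b ha hb hab
  refine ⟨a • y₁ + b • y₂, hK hy₁ hy₂ ha hb hab, ?_⟩
  obtain rfl : b = 1 - a := by linarith
  module

private lemma key_sum {V : Type*} [AddCommGroup V] [Module ℝ V] {ι : Type*} [DecidableEq ι]
    (I : Finset ι) (f : ι → V) (x : ι) (hx : x ∈ I) (n m : ℝ) (hn : n ≠ 0) (hm : m ≠ 0) :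
    n • ∑ j ∈ I, ((n + 1) / (m * n) - if j = x then n⁻¹ else 0) • f j + f x
      = (n + 1) • (m⁻¹ • ∑ j ∈ I, f j) := by
  rw [Finset.smul_sum, smul_smul, Finset.smul_sum]
  have hstep : ∀ j ∈ I, n • (((n + 1) / (m * n) - if j = x then n⁻¹ else 0) • f j)
      = ((n + 1) * m⁻¹) • f j - (if j = x then f x else 0) := by
    intro j _
    split_ifs with h
    · subst h
      rw [smul_smul, show n * ((n + 1) / (m * n) - n⁻¹) = (n + 1) * m⁻¹ - 1 by
        field_simp, sub_smul, one_smul]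
    · rw [smul_smul, sub_zero, sub_zero]
      congr 1
      field_simp
  rw [Finset.sum_congr rfl hstep, Finset.sum_sub_distrib,
    Finset.sum_ite_eq' I x (fun _ => f x), if_pos hx]
  abel

private lemma weights_sum {ι : Type*} [DecidableEq ι] (I : Finset ι) (x : ι) (hx : x ∈ I)
    (n m : ℝ) (hn : n ≠ 0) (hm : m ≠ 0) (hmcard : m = I.card) :
    ∑ j ∈ I, ((n + 1) / (m * n) - if j = x then n⁻¹ else 0) = 1 := by
  rw [Finset.sum_sub_distrib, Finset.sum_const, Finset.sum_ite_eq' I x (fun _ => n⁻¹),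
    if_pos hx, nsmul_eq_mul, ← hmcard]
  field_simp
  ring

lemma exists_center {n : ℕ} (hn : 1 ≤ n)
    (K : Set (EuclideanSpace ℝ (Fin n)))
    (hKne : K.Nonempty) (hKcpt : IsCompact K) (hKcv : Convex ℝ K) :
    ∃ c : EuclideanSpace ℝ (Fin n), ∀ x ∈ K, ∃ y ∈ K,
      (n : ℝ) • y + x = ((n : ℝ) + 1) • c := by
  classical
  have hn0 : (0 : ℝ) < (n : ℝ) := by exact_mod_cast hn
  have hn1 : (0 : ℝ) < (n : ℝ) + 1 := by positivity
  set F : K → Set (EuclideanSpace ℝ (Fin n)) :=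
    fun x => (fun y => ((n : ℝ) + 1)⁻¹ • ((n : ℝ) • y + (x : EuclideanSpace ℝ (Fin n)))) '' K
    with hF
  have hFconv : ∀ x : K, Convex ℝ (F x) := fun x => conv_image hKcv _ _ _
  have hFcpt : ∀ x : K, IsCompact (F x) := fun x =>
    hKcpt.image (by fun_prop)
  have hfr : Module.finrank ℝ (EuclideanSpace ℝ (Fin n)) = n := finrank_euclideanSpace_fin
  have hinter : ∀ I : Finset K,
      I.card ≤ Module.finrank ℝ (EuclideanSpace ℝ (Fin n)) + 1 → (⋂ i ∈ I, F i).Nonempty := by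
    intro I hIcard
    rw [hfr] at hIcard
    rcases I.eq_empty_or_nonempty with rfl | hIne
    · simp
    have hm0 : (0 : ℝ) < (I.card : ℝ) := by exact_mod_cast Finset.card_pos.mpr hIne
    set m : ℝ := (I.card : ℝ) with hm
    have hmn1 : m ≤ (n : ℝ) + 1 := by rw [hm]; exact_mod_cast hIcard
    refine ⟨m⁻¹ • ∑ j ∈ I, (j : EuclideanSpace ℝ (Fin n)), ?_⟩
    rw [Set.mem_iInter₂]
    intro x hxI
    set w : K → ℝ := fun j => ((n : ℝ) + 1) / (m * n) - (if j = x then (n : ℝ)⁻¹ else 0) with hw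
    have hw0 : ∀ j ∈ I, 0 ≤ w j := by
      intro j _
      simp only [hw]
      split_ifs with h
      · have heq : ((n:ℝ)+1)/(m*n) - (n:ℝ)⁻¹ = ((n:ℝ)+1 - m)/(m*n) := by
          field_simp
        rw [heq]
        exact div_nonneg (by linarith) (by positivity)
      · simp only [sub_zero]
        positivity
    have hw1 : ∑ j ∈ I, w j = 1 := weights_sum I x hxI _ _ (ne_of_gt hn0) (ne_of_gt hm0) hm
    have hyK : (∑ j ∈ I, w j • (j : EuclideanSpace ℝ (Fin n))) ∈ K :=
      hKcv.sum_mem hw0 hw1 (fun j _ => j.2)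
    refine ⟨∑ j ∈ I, w j • (j : EuclideanSpace ℝ (Fin n)), hyK, ?_⟩
    have key := key_sum I (fun j => (j : EuclideanSpace ℝ (Fin n))) x hxI
      (n : ℝ) m (ne_of_gt hn0) (ne_of_gt hm0)
    show ((n : ℝ) + 1)⁻¹ • ((n : ℝ) • ∑ j ∈ I, w j • (j : EuclideanSpace ℝ (Fin n))
        + (x : EuclideanSpace ℝ (Fin n))) = _
    rw [hw, key, smul_smul, inv_mul_cancel₀ (ne_of_gt hn1), one_smul]
  obtain ⟨c, hc⟩ := Convex.helly_theorem_compact' (𝕜 := ℝ) hFconv hFcpt hinter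
  refine ⟨c, fun x hxK => ?_⟩
  have hcx : c ∈ F ⟨x, hxK⟩ := Set.mem_iInter.mp hc ⟨x, hxK⟩
  obtain ⟨y, hyK, hgy⟩ := hcx
  refine ⟨y, hyK, ?_⟩
  have h2 := congrArg (fun z => ((n : ℝ) + 1) • z) hgy
  simpa [smul_smul, ← mul_assoc, mul_inv_cancel₀ (ne_of_gt hn1)] using h2

/-- `-n·K` contains a translate of `K`. -/
theorem translate_into_neg_n_smul {n : ℕ} (hn : 1 ≤ n)
    (K : Set (EuclideanSpace ℝ (Fin n)))
    (hKne : K.Nonempty) (hKcpt : IsCompact K) (hKcv : Convex ℝ K) :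
    ∃ v : EuclideanSpace ℝ (Fin n), (fun y => y + v) '' K ⊆ (-(n : ℝ)) • K := by
  obtain ⟨c, hc⟩ := exists_center hn K hKne hKcpt hKcv
  refine ⟨-(((n : ℝ) + 1) • c), ?_⟩
  rintro _ ⟨x, hxK, rfl⟩
  obtain ⟨y, hyK, hxy⟩ := hc x hxK
  refine ⟨y, hyK, ?_⟩
  show (fun z => -(n:ℝ) • z) y = (fun y => y + -(((n : ℝ) + 1) • c)) x
  show -(n:ℝ) • y = x + -(((n : ℝ) + 1) • c)
  rw [neg_smul]
  rw [← hxy]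
  abel
end

section
/- Let K and L be nonempty compact convex sets in ℝⁿ such that for every unit vector u ∈ ℝⁿ, the orthogonal projection L_u contains a translate of K_u. Then for every t ∈ [0,1], the Minkowski combination M = (1−t)·K + t·L also satisfies: for every unit vector u, L_u contains a translate of M_u. -/
open Set MeasureTheory Pointwise

/-- the shadow covering condition is preserved under Minkowski
interpolation `(1-t)K + tL`. -/
theorem shadow_covering_minkowski_interpolation {n : ℕ}
    (K L : Set (EuclideanSpace ℝ (Fin n)))
    (hKne : K.Nonempty) (hKcpt : IsCompact K) (hKcv : Convex ℝ K)
    (hLne : L.Nonempty) (hLcpt : IsCompact L) (hLcv : Convex ℝ L)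
    (hcov : ∀ u : EuclideanSpace ℝ (Fin n), ‖u‖ = 1 →
      ∃ w ∈ (ℝ ∙ u)ᗮ, (fun y => y + w) '' projSet u K ⊆ projSet u L) :
    ∀ t ∈ Set.Icc (0 : ℝ) 1, ∀ u : EuclideanSpace ℝ (Fin n), ‖u‖ = 1 →
      ∃ w ∈ (ℝ ∙ u)ᗮ,
        (fun y => y + w) '' projSet u ((1 - t) • K + t • L) ⊆ projSet u L := by
  intro t ht u hu
  obtain ⟨w, hwmem, hw⟩ := hcov u hu
  refine ⟨(1 - t) • w, Submodule.smul_mem _ _ hwmem, ?_⟩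
  rintro _ ⟨_, ⟨x, hx, rfl⟩, rfl⟩
  rw [Set.mem_add] at hx
  obtain ⟨a, ha, b, hb, rfl⟩ := hx
  obtain ⟨k, hk, rfl⟩ := ha
  obtain ⟨l, hl, rfl⟩ := hb
  have hconv : Convex ℝ (projSet u L) :=
    hLcv.linear_image
      (((ℝ ∙ u)ᗮ.subtype).comp (Submodule.orthogonalProjectionOnto (ℝ ∙ u)ᗮ).toLinearMap)
  have hkK : (Submodule.orthogonalProjectionOnto (ℝ ∙ u)ᗮ k : EuclideanSpace ℝ (Fin n)) + w ∈ projSet u L :=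
    hw ⟨_, ⟨k, hk, rfl⟩, rfl⟩
  have hlL : (Submodule.orthogonalProjectionOnto (ℝ ∙ u)ᗮ l : EuclideanSpace ℝ (Fin n)) ∈ projSet u L :=
    ⟨l, hl, rfl⟩
  have key := hconv (a := 1 - t) (b := t) hkK hlL (by linarith [ht.2]) ht.1 (by ring)
  convert key using 1
  simp only [map_add, _root_.map_smul, Submodule.coe_add, Submodule.coe_smul, smul_add]
  module
end

section
/- Let n ≥ 2. Let Ξ be the n-dimensional simplex in ℝⁿ with vertices at the origin o and the standard basis vectors e₁, …, eₙ, let p = (1/(n−1), …, 1/(n−1)) ∈ ℝⁿ, and let D be the cap body given by the convex hull of Ξ ∪ {p}. Let K be a nonempty compact convex set in ℝⁿ such that for every unit vector u, the orthogonal projection Ξ_u contains a translate of K_u. Then there exists x ∈ ℝⁿ such that K + x ⊆ D ⊆ (n/(n−1))·Ξ. -/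
open Set MeasureTheory Pointwise

section AuxHide

variable {n : ℕ}

lemma euclid_sum_apply {m : ℕ} (f : Fin m → EuclideanSpace ℝ (Fin n)) (i : Fin n) :
    (∑ j, f j) i = ∑ j, f j i := by
  induction (Finset.univ : Finset (Fin m)) using Finset.cons_induction with
  | empty => rfl
  | cons a s ha ih => rw [Finset.sum_cons, Finset.sum_cons, ← ih]; rfl

lemma sum_smul_single (x : EuclideanSpace ℝ (Fin n)) :
    ∑ j : Fin n, x j • EuclideanSpace.single j (1:ℝ) = x := by
  ext i
  rw [euclid_sum_apply]
  simp [EuclideanSpace.single_apply]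

lemma proj_coord (i : Fin n) (x : EuclideanSpace ℝ (Fin n)) (j : Fin n) (hj : j ≠ i) :
    (Submodule.orthogonalProjectionOnto (ℝ ∙ EuclideanSpace.single i (1:ℝ))ᗮ x :
      EuclideanSpace ℝ (Fin n)) j = x j := by
  have h : (ℝ ∙ EuclideanSpace.single i (1:ℝ)).starProjection x
      + (ℝ ∙ EuclideanSpace.single i (1:ℝ))ᗮ.starProjection x = x := by
    rw [Submodule.starProjection_add_starProjection_orthogonal]
  have h2 : (ℝ ∙ EuclideanSpace.single i (1:ℝ)).starProjection x
      = x i • EuclideanSpace.single i (1:ℝ) := by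
    rw [Submodule.starProjection_unit_singleton ℝ (by simp [EuclideanSpace.norm_single])]
    simp [EuclideanSpace.inner_single_left]
  have h3 := congrArg (fun y : EuclideanSpace ℝ (Fin n) => y j) h
  simp only [PiLp.add_apply, h2] at h3
  rw [← Submodule.starProjection_apply]
  simpa [EuclideanSpace.single_apply, hj] using h3

lemma xi_sub :
    convexHull ℝ (insert (0 : EuclideanSpace ℝ (Fin n))
        (Set.range fun i : Fin n => EuclideanSpace.single i (1 : ℝ)))
      ⊆ {z : EuclideanSpace ℝ (Fin n) | (∀ j, 0 ≤ z j) ∧ ∑ j, z j ≤ 1} := by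
  apply convexHull_min
  · rintro z (rfl | ⟨i, rfl⟩)
    · constructor
      · intro j; rfl
      · simp
    · refine ⟨fun j => ?_, ?_⟩
      · simp only [EuclideanSpace.single_apply]
        positivity
      · simp [EuclideanSpace.single_apply]
  · intro a ha b hb s t hs ht hst
    constructor
    · intro j
      have : (s • a + t • b) j = s * a j + t * b j := rfl
      rw [this]
      have := ha.1 j; have := hb.1 j
      positivity
    · have : ∑ j, (s • a + t • b) j = s * ∑ j, a j + t * ∑ j, b j := by
        rw [Finset.mul_sum, Finset.mul_sum, ← Finset.sum_add_distrib]
        rfl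
      rw [this]
      calc s * ∑ j, a j + t * ∑ j, b j ≤ s * 1 + t * 1 := by
            gcongr
            exacts [ha.2, hb.2]
        _ = 1 := by linarith

lemma mem_xi {z : EuclideanSpace ℝ (Fin n)} (h0 : ∀ j, 0 ≤ z j) (h1 : ∑ j, z j ≤ 1) :
    z ∈ convexHull ℝ (insert (0 : EuclideanSpace ℝ (Fin n))
        (Set.range fun i : Fin n => EuclideanSpace.single i (1 : ℝ))) := by
  have hconv := convex_convexHull ℝ (insert (0 : EuclideanSpace ℝ (Fin n))
        (Set.range fun i : Fin n => EuclideanSpace.single i (1 : ℝ)))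
  have := hconv.sum_mem (t := (Finset.univ : Finset (Option (Fin n))))
    (w := fun o => o.elim (1 - ∑ j, z j) (fun j => z j))
    (z := fun o => o.elim 0 (fun j => EuclideanSpace.single j (1:ℝ)))
    (by rintro (_ | j) _
        · simpa using h1
        · exact h0 j)
    (by rw [Fintype.sum_option]; simp)
    (by rintro (_ | j) _
        · exact subset_convexHull ℝ _ (Set.mem_insert _ _)
        · exact subset_convexHull ℝ _ (Set.mem_insert_of_mem _ ⟨j, rfl⟩))
  rw [Fintype.sum_option] at this
  simpa [sum_smul_single] using this

end AuxHide

/-- if every shadow of the standard simplex `Ξ` (with vertices at the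
origin and the standard basis vectors) contains a translate of the corresponding
shadow of `K`, then a translate of `K` lies in the cap body
`D = conv(Ξ ∪ {p})`, where `p = (1/(n-1), …, 1/(n-1))`, and `D ⊆ (n/(n-1))·Ξ`. -/
theorem hide_behind_standard_simplex {n : ℕ} (hn : 2 ≤ n)
    (Ξ D : Set (EuclideanSpace ℝ (Fin n))) (p : EuclideanSpace ℝ (Fin n))
    (hΞ : Ξ = convexHull ℝ
      (insert (0 : EuclideanSpace ℝ (Fin n))
        (Set.range fun i : Fin n => EuclideanSpace.single i (1 : ℝ))))
    (hp : p = fun _ : Fin n => 1 / ((n : ℝ) - 1))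
    (hD : D = convexHull ℝ (Ξ ∪ {p}))
    (K : Set (EuclideanSpace ℝ (Fin n)))
    (hKne : K.Nonempty) (hKcpt : IsCompact K) (hKcv : Convex ℝ K)
    (hcov : ∀ u : EuclideanSpace ℝ (Fin n), ‖u‖ = 1 →
      ∃ w ∈ (ℝ ∙ u)ᗮ, (fun y => y + w) '' projSet u K ⊆ projSet u Ξ) :
    (∃ x : EuclideanSpace ℝ (Fin n), (fun y => y + x) '' K ⊆ D) ∧
      D ⊆ ((n : ℝ) / ((n : ℝ) - 1)) • Ξ := by
  have hn1 : (1:ℝ) ≤ (n:ℝ) - 1 := by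
    have : (2:ℝ) ≤ (n:ℝ) := by exact_mod_cast hn
    linarith
  have hn1' : (0:ℝ) < (n:ℝ) - 1 := by linarith
  have hnpos : (0:ℝ) < (n:ℝ) := by linarith
  have hne : (n:ℝ) ≠ 0 := ne_of_gt hnpos
  have hne1 : (n:ℝ) - 1 ≠ 0 := ne_of_gt hn1'
  set c : ℝ := (n : ℝ) / ((n : ℝ) - 1) with hc
  have hc1 : 1 ≤ c := by
    rw [hc, le_div_iff₀ hn1']; linarith
  have hc0 : 0 < c := lt_of_lt_of_le one_pos hc1
  have hΞconv : Convex ℝ Ξ := hΞ ▸ convex_convexHull ℝ _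
  have hDconv : Convex ℝ D := hD ▸ convex_convexHull ℝ _
  have hΞD : Ξ ⊆ D := hD ▸ (Set.subset_union_left.trans (subset_convexHull ℝ _))
  have hpD : p ∈ D := hD ▸ subset_convexHull ℝ _ (Set.mem_union_right _ rfl)
  have hpj : ∀ j : Fin n, p j = 1 / ((n:ℝ) - 1) := fun j => by rw [hp]
  constructor
  · -- main part
    have hconteval : ∀ j : Fin n, Continuous fun k : EuclideanSpace ℝ (Fin n) => k j :=
      fun j => (EuclideanSpace.proj j).continuous
    set m : Fin n → ℝ := fun j => sInf ((fun k => k j) '' K) with hm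
    have hbdd : ∀ j, BddBelow ((fun k => k j) '' K) :=
      fun j => (hKcpt.image (hconteval j)).bddBelow
    have hm_le : ∀ j, ∀ k ∈ K, m j ≤ k j := fun j k hk =>
      csInf_le (hbdd j) ⟨k, hk, rfl⟩
    have hcov' : ∀ i : Fin n, ∃ w ∈ (ℝ ∙ EuclideanSpace.single i (1:ℝ))ᗮ,
        (fun y => y + w) '' projSet (EuclideanSpace.single i (1:ℝ)) K
          ⊆ projSet (EuclideanSpace.single i (1:ℝ)) Ξ :=
      fun i => hcov _ (by simp [EuclideanSpace.norm_single])
    choose W hWmem hWsub using hcov'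
    have key : ∀ i : Fin n, ∀ k ∈ K,
        (∀ j, j ≠ i → 0 ≤ k j + W i j) ∧
        ∑ j ∈ Finset.univ.erase i, (k j + W i j) ≤ 1 := by
      intro i k hk
      have hmem : (Submodule.orthogonalProjectionOnto (ℝ ∙ EuclideanSpace.single i (1:ℝ))ᗮ k :
          EuclideanSpace ℝ (Fin n)) + W i ∈ projSet (EuclideanSpace.single i (1:ℝ)) Ξ :=
        hWsub i ⟨_, ⟨k, hk, rfl⟩, rfl⟩
      obtain ⟨ξ, hξ, hξeq⟩ := hmem
      have hcoord : ∀ j, j ≠ i → ξ j = k j + W i j := by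
        intro j hj
        have h4 := congrArg (fun y : EuclideanSpace ℝ (Fin n) => y j) hξeq
        simp only at h4
        rw [proj_coord i ξ j hj, PiLp.add_apply, proj_coord i k j hj] at h4
        exact h4
      have hξ' := xi_sub (hΞ ▸ hξ)
      constructor
      · intro j hj
        rw [← hcoord j hj]; exact hξ'.1 j
      · calc ∑ j ∈ Finset.univ.erase i, (k j + W i j)
            = ∑ j ∈ Finset.univ.erase i, ξ j := by
              apply Finset.sum_congr rfl
              intro j hj
              exact (hcoord j (Finset.mem_erase.mp hj).1).symm
          _ ≤ ∑ j, ξ j := by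
              apply Finset.sum_le_sum_of_subset_of_nonneg (Finset.erase_subset _ _)
              intro j _ _; exact hξ'.1 j
          _ ≤ 1 := hξ'.2
    have hWm : ∀ i j, j ≠ i → -(W i j) ≤ m j := by
      intro i j hj
      apply le_csInf (hKne.image _)
      rintro _ ⟨k, hk, rfl⟩
      have := (key i k hk).1 j hj
      simp only
      linarith
    set x0 : EuclideanSpace ℝ (Fin n) := WithLp.toLp 2 (fun j => -(m j)) with hx0
    refine ⟨x0, ?_⟩
    rintro _ ⟨k, hk, rfl⟩
    set z : EuclideanSpace ℝ (Fin n) := k + x0 with hz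
    have hzj : ∀ j, z j = k j - m j := fun j => by
      show k j + -(m j) = k j - m j
      ring
    have h0 : ∀ j, 0 ≤ z j := by
      intro j; rw [hzj j]
      have := hm_le j k hk; linarith
    have h1 : ∀ i, ∑ j ∈ Finset.univ.erase i, z j ≤ 1 := by
      intro i
      calc ∑ j ∈ Finset.univ.erase i, z j
          ≤ ∑ j ∈ Finset.univ.erase i, (k j + W i j) := by
            apply Finset.sum_le_sum
            intro j hj
            have := hWm i j (Finset.mem_erase.mp hj).1
            rw [hzj j]
            linarith
        _ ≤ 1 := (key i k hk).2
    -- show z ∈ D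
    show z ∈ D
    set s : ℝ := ∑ j, z j with hs
    have hserase : ∀ i, ∑ j ∈ Finset.univ.erase i, z j = s - z i := by
      intro i
      rw [Finset.sum_erase_eq_sub (Finset.mem_univ i)]
    have hzi_ge : ∀ i, s - 1 ≤ z i := by
      intro i
      have h1' := h1 i
      rw [hserase i] at h1'
      linarith
    by_cases hs1 : s ≤ 1
    · exact hΞD (hΞ ▸ mem_xi h0 hs1)
    push_neg at hs1
    set l : ℝ := ((n:ℝ) - 1) * (s - 1) with hl
    have hl0 : 0 ≤ l := by
      apply mul_nonneg (le_of_lt hn1'); linarith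
    have hsum_bound : ((n:ℝ) - 1) * s ≤ n := by
      have hsum : ∑ i : Fin n, (s - z i) ≤ ∑ _i : Fin n, (1:ℝ) := by
        apply Finset.sum_le_sum
        intro i _
        rw [← hserase i]; exact h1 i
      rw [Finset.sum_sub_distrib, ← hs, Finset.sum_const, Finset.sum_const,
        Finset.card_univ, Fintype.card_fin, nsmul_eq_mul, nsmul_eq_mul,
        mul_one] at hsum
      nlinarith [hsum]
    have hl1 : l ≤ 1 := by
      rw [hl]; nlinarith
    rcases eq_or_lt_of_le hl1 with hleq | hllt
    · -- l = 1 : z = p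
      have hleq' : ((n:ℝ) - 1) * (s - 1) = 1 := by rw [← hl]; exact hleq
      have hsval : s = (n:ℝ) / ((n:ℝ) - 1) := by
        field_simp
        linear_combination hleq'
      have hzero : ∑ j : Fin n, (z j - (s - 1)) = 0 := by
        rw [Finset.sum_sub_distrib, ← hs, Finset.sum_const, Finset.card_univ,
          Fintype.card_fin, nsmul_eq_mul]
        linear_combination -hleq'
      have hall : ∀ j : Fin n, z j - (s - 1) = 0 := fun j =>
        (Finset.sum_eq_zero_iff_of_nonneg (fun i _ => by
          have := hzi_ge i; linarith)).mp hzero j (Finset.mem_univ j)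
      have hzp : z = p := by
        ext j
        rw [hpj j]
        have hj := hall j
        have : z j = s - 1 := by linarith
        rw [this, hsval]
        field_simp
        ring
      rw [hzp]; exact hpD
    · -- l < 1
      have h1l : 0 < 1 - l := by linarith
      set q : EuclideanSpace ℝ (Fin n) := (1 - l)⁻¹ • (z - l • p) with hq
      have hqj : ∀ j, q j = (1 - l)⁻¹ * (z j - (s - 1)) := by
        intro j
        show (1 - l)⁻¹ * ((z - l • p) j) = _
        congr 1
        show z j - l * p j = _
        rw [hpj j, hl]
        field_simp
      have hq0 : ∀ j, 0 ≤ q j := by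
        intro j
        rw [hqj j]
        have := hzi_ge j
        apply mul_nonneg (le_of_lt (inv_pos.mpr h1l))
        linarith
      have hqsum : ∑ j, q j = 1 := by
        have h' : ∑ j, q j = (1 - l)⁻¹ * ∑ j, (z j - (s - 1)) := by
          rw [Finset.mul_sum]
          exact Finset.sum_congr rfl fun j _ => hqj j
        have h'' : ∑ j, (z j - (s - 1)) = 1 - l := by
          rw [Finset.sum_sub_distrib, ← hs, Finset.sum_const, Finset.card_univ,
            Fintype.card_fin, nsmul_eq_mul, hl]
          ring
        rw [h', h'', inv_mul_cancel₀ (ne_of_gt h1l)]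
      have hqΞ : q ∈ Ξ := hΞ ▸ mem_xi hq0 (le_of_eq hqsum)
      have hzeq : z = l • p + (1 - l) • q := by
        rw [hq, smul_inv_smul₀ (ne_of_gt h1l)]
        abel
      rw [hzeq]
      exact hDconv hpD (hΞD hqΞ) hl0 (le_of_lt h1l) (by ring)
  · -- D ⊆ c • Ξ
    rw [hD]
    apply convexHull_min _ (hΞconv.smul c)
    rintro x (hx | rfl)
    · refine ⟨c⁻¹ • x, ?_, smul_inv_smul₀ (ne_of_gt hc0) x⟩
      rw [hΞ] at hx ⊢
      have hx' := xi_sub hx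
      apply mem_xi
      · intro j
        have h' : (c⁻¹ • x) j = c⁻¹ * x j := rfl
        rw [h']
        have := hx'.1 j
        positivity
      · have h' : ∑ j, (c⁻¹ • x) j = c⁻¹ * ∑ j, x j := by
          rw [Finset.mul_sum]; rfl
        rw [h']
        calc c⁻¹ * ∑ j, x j ≤ c⁻¹ * 1 := by
              gcongr
              exact hx'.2
          _ ≤ 1 := by rw [mul_one]; exact inv_le_one_of_one_le₀ hc1
    · refine ⟨WithLp.toLp 2 (fun _ => 1 / (n:ℝ) : Fin n → ℝ), ?_, ?_⟩
      · rw [hΞ]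
        apply mem_xi
        · intro j; positivity
        · rw [Finset.sum_const, Finset.card_univ, Fintype.card_fin, nsmul_eq_mul,
            mul_one_div, div_self hne]
      · rw [← WithLp.toLp_ofLp (x := x), hp]
        ext j
        show c * (1 / (n:ℝ)) = 1 / ((n:ℝ) - 1)
        rw [hc]
        field_simp
end

section
/- Let K and L be nonempty compact convex sets in ℝⁿ and let d ∈ {1, …, n−1}. Suppose that for every (n−d)-dimensional linear subspace ξ ⊆ ℝⁿ, the orthogonal projection L_ξ of L onto ξ contains a translate of the corresponding projection K_ξ. Then there exists x ∈ ℝⁿ such that K + x ⊆ (n/(n−d))·L. -/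
open Set MeasureTheory Pointwise
open scoped RealInnerProductSpace

variable {n : ℕ}

local notation "E" => EuclideanSpace ℝ (Fin n)

/-- support function -/
noncomputable def hsup (K : Set (EuclideanSpace ℝ (Fin n))) (u : EuclideanSpace ℝ (Fin n)) : ℝ :=
  sSup ((fun x => ⟪x, u⟫) '' K)

lemma bddAbove_hsup {K : Set E} (hK : IsCompact K) (u : E) :
    BddAbove ((fun x => ⟪x, u⟫) '' K) :=
  (hK.image (continuous_id.inner continuous_const)).bddAbove

lemma inner_le_hsup {K : Set E} (hK : IsCompact K) {x : E} (hx : x ∈ K) (u : E) :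
    ⟪x, u⟫ ≤ hsup K u :=
  le_csSup (bddAbove_hsup hK u) ⟨x, hx, rfl⟩

lemma hsup_le {K : Set E} (hK : K.Nonempty) {u : E} {b : ℝ}
    (h : ∀ x ∈ K, ⟪x, u⟫ ≤ b) : hsup K u ≤ b :=
  csSup_le (hK.image _) (by rintro r ⟨x, hx, rfl⟩; exact h x hx)

lemma hsup_zero {K : Set E} (hKne : K.Nonempty) (hK : IsCompact K) : hsup K 0 = 0 := by
  apply le_antisymm
  · exact hsup_le hKne fun x _ => by simp
  · obtain ⟨x, hx⟩ := hKne
    simpa using inner_le_hsup hK hx 0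

lemma hsup_add_le {K : Set E} (hKne : K.Nonempty) (hK : IsCompact K) (u v : E) :
    hsup K (u + v) ≤ hsup K u + hsup K v := by
  apply hsup_le hKne
  intro x hx
  rw [inner_add_right]
  exact add_le_add (inner_le_hsup hK hx u) (inner_le_hsup hK hx v)

lemma hsup_smul {K : Set E} (hKne : K.Nonempty) (hK : IsCompact K) {a : ℝ} (ha : 0 ≤ a) (u : E) :
    hsup K (a • u) = a * hsup K u := by
  rcases eq_or_lt_of_le ha with rfl | ha'
  · simp [hsup_zero hKne hK]
  apply le_antisymm
  · apply hsup_le hKne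
    intro x hx
    rw [real_inner_smul_right]
    exact mul_le_mul_of_nonneg_left (inner_le_hsup hK hx u) ha
  · rw [← le_div_iff₀' ha']
    apply hsup_le hKne
    intro x hx
    rw [le_div_iff₀' ha', ← real_inner_smul_right]
    exact inner_le_hsup hK hx _

lemma hsup_sum_le {K : Set E} (hKne : K.Nonempty) (hK : IsCompact K)
    {ι : Type*} (s : Finset ι) (v : ι → E) :
    hsup K (∑ i ∈ s, v i) ≤ ∑ i ∈ s, hsup K (v i) := by
  classical
  induction s using Finset.cons_induction with
  | empty => simp [hsup_zero hKne hK]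
  | cons i s his ih =>
    rw [Finset.sum_cons, Finset.sum_cons]
    exact (hsup_add_le hKne hK _ _).trans (by linarith)

lemma hsup_smulset {L : Set E} (hLne : L.Nonempty) (hL : IsCompact L) {a : ℝ} (ha : 0 < a)
    (u : E) : hsup (a • L) u = a * hsup L u := by
  have h1 : (a • L).Nonempty := hLne.smul_set
  have h2 : IsCompact (a • L) := hL.smul a
  apply le_antisymm
  · apply hsup_le h1
    rintro x ⟨y, hy, rfl⟩
    rw [real_inner_smul_left]
    exact mul_le_mul_of_nonneg_left (inner_le_hsup hL hy u) ha.le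
  · rw [mul_comm, ← le_div_iff₀ ha]
    apply hsup_le hLne
    intro x hx
    rw [le_div_iff₀ ha, mul_comm, ← real_inner_smul_left]
    exact inner_le_hsup h2 (smul_mem_smul_set hx) u

/-- membership from support function domination -/
lemma mem_of_inner_le_hsup {M : Set E} (hMne : M.Nonempty) (hM : IsCompact M)
    (hMcv : Convex ℝ M) {z : E} (h : ∀ u : E, ⟪z, u⟫ ≤ hsup M u) : z ∈ M := by
  by_contra hz
  obtain ⟨f, c, hfc, hcz⟩ := geometric_hahn_banach_closed_point hMcv hM.isClosed hz
  obtain ⟨u, hu⟩ : ∃ u : E, ∀ y : E, f y = ⟪y, u⟫ := by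
    refine ⟨(InnerProductSpace.toDual ℝ _).symm f, fun y => ?_⟩
    rw [real_inner_comm, ← InnerProductSpace.toDual_apply_apply,
      (InnerProductSpace.toDual ℝ _).apply_symm_apply]
  have h1 : hsup M u ≤ c := hsup_le hMne fun x hx => by rw [← hu]; exact (hfc x hx).le
  have h2 : ⟪z, u⟫ > c := by rw [← hu]; exact hcz
  exact absurd (h u) (by linarith)

/-- Orthogonal projection of a set onto a linear subspace `ξ` of `ℝⁿ`,
viewed as a subset of the ambient space. -/
noncomputable def projSub {n : ℕ} (ξ : Submodule ℝ (EuclideanSpace ℝ (Fin n)))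
    (K : Set (EuclideanSpace ℝ (Fin n))) : Set (EuclideanSpace ℝ (Fin n)) :=
  (fun x => (Submodule.orthogonalProjection ξ x : EuclideanSpace ℝ (Fin n))) '' K

lemma inner_orthProj (ξ : Submodule ℝ E) {u : E} (hu : u ∈ ξ) (x : E) :
    ⟪(Submodule.orthogonalProjection ξ x : E), u⟫ = ⟪x, u⟫ := by
  have h1 := Submodule.sub_starProjection_mem_orthogonal (K := ξ) x
  have h2 : ⟪x - (Submodule.orthogonalProjection ξ x : E), u⟫ = 0 := by
    rw [real_inner_comm]
    exact (Submodule.mem_orthogonal ξ _).mp h1 u hu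
  rw [inner_sub_left] at h2
  linarith

lemma continuous_orthProj (ξ : Submodule ℝ E) :
    Continuous fun x : E => (Submodule.orthogonalProjection ξ x : E) :=
  continuous_subtype_val.comp (Submodule.orthogonalProjection ξ).continuous

lemma hsup_projSub {K : Set E} (ξ : Submodule ℝ E) {u : E} (hu : u ∈ ξ) :
    hsup (projSub ξ K) u = hsup K u := by
  unfold hsup projSub
  rw [← Set.image_comp]
  exact congrArg sSup (Set.image_congr fun x _ => inner_orthProj ξ hu x)

lemma hsup_shadow_le {K L : Set E} (hKne : K.Nonempty) (hKcpt : IsCompact K)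
    (hLne : L.Nonempty) (hLcpt : IsCompact L) {ξ : Submodule ℝ E} {w : E}
    (hsub : (fun y => y + w) '' projSub ξ K ⊆ projSub ξ L) {u : E} (hu : u ∈ ξ) :
    hsup K u + ⟪w, u⟫ ≤ hsup L u := by
  rw [← hsup_projSub (K := K) ξ hu, ← hsup_projSub (K := L) ξ hu]
  have hPK : IsCompact (projSub ξ K) := hKcpt.image (continuous_orthProj ξ)
  have hPL : IsCompact (projSub ξ L) := hLcpt.image (continuous_orthProj ξ)
  have hPKne : (projSub ξ K).Nonempty := hKne.image _
  have hb : ∀ x ∈ projSub ξ K, ⟪x, u⟫ ≤ hsup (projSub ξ L) u - ⟪w, u⟫ := by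
    intro x hx
    have hxw : x + w ∈ projSub ξ L := hsub ⟨x, hx, rfl⟩
    have := inner_le_hsup hPL hxw u
    rw [inner_add_left] at this
    linarith
  linarith [hsup_le hPKne hb]

lemma exists_superspace (V : Submodule ℝ E) {m : ℕ} (h1 : Module.finrank ℝ V ≤ m)
    (h2 : m ≤ n) : ∃ ξ : Submodule ℝ E, V ≤ ξ ∧ Module.finrank ℝ ξ = m := by
  obtain ⟨k, hk⟩ : ∃ k, Module.finrank ℝ V + k = m := ⟨m - Module.finrank ℝ V, by omega⟩
  clear h1
  induction k generalizing V with
  | zero => exact ⟨V, le_rfl, by omega⟩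
  | succ k ih =>
    have hE : Module.finrank ℝ E = n := finrank_euclideanSpace_fin
    have hlt : Module.finrank ℝ V < Module.finrank ℝ E := by omega
    obtain ⟨x, hx⟩ := Submodule.exists_of_finrank_lt V hlt
    have hx0 : x ≠ 0 := by
      intro h
      exact hx 1 one_ne_zero (by simp [h])
    have hinf : V ⊓ (ℝ ∙ x) = ⊥ := by
      rw [eq_bot_iff]
      rintro y ⟨hyV, hyx⟩
      obtain ⟨r, rfl⟩ := Submodule.mem_span_singleton.mp hyx
      rcases eq_or_ne r 0 with rfl | hr
      · simp
      · exact absurd hyV (hx r hr)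
    have hfr : Module.finrank ℝ ↥(V ⊔ (ℝ ∙ x)) = Module.finrank ℝ V + 1 := by
      have := Submodule.finrank_sup_add_finrank_inf_eq V (ℝ ∙ x)
      rw [hinf, finrank_span_singleton hx0] at this
      simpa using this
    obtain ⟨ξ, hle, hrk⟩ := ih (V ⊔ (ℝ ∙ x)) (by omega)
    exact ⟨ξ, le_sup_left.trans hle, hrk⟩

lemma card_filter_mem_powersetCard {ι : Type*} [DecidableEq ι] (s : Finset ι) {i : ι}
    (hi : i ∈ s) {m : ℕ} (hm : 1 ≤ m) :
    ((Finset.powersetCard m s).filter (fun T => i ∈ T)).card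
      = (s.card - 1).choose (m - 1) := by
  rw [← Finset.card_erase_of_mem hi, ← Finset.card_powersetCard]
  refine Finset.card_bij' (fun T _ => T.erase i) (fun U _ => insert i U) ?hi ?hj ?left ?right
  case hi =>
    intro T hT
    simp only [Finset.mem_filter, Finset.mem_powersetCard] at hT
    obtain ⟨⟨hTs, hTc⟩, hiT⟩ := hT
    rw [Finset.mem_powersetCard]
    constructor
    · exact fun x hx => Finset.mem_erase.mpr
        ⟨(Finset.mem_erase.mp hx).1, hTs (Finset.mem_erase.mp hx).2⟩
    · rw [Finset.card_erase_of_mem hiT, hTc]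
  case hj =>
    intro U hU
    rw [Finset.mem_powersetCard] at hU
    obtain ⟨hUs, hUc⟩ := hU
    have hiU : i ∉ U := fun h => (Finset.mem_erase.mp (hUs h)).1 rfl
    simp only [Finset.mem_filter, Finset.mem_powersetCard]
    refine ⟨⟨?_, ?_⟩, Finset.mem_insert_self i U⟩
    · intro x hx
      rcases Finset.mem_insert.mp hx with rfl | hxU
      · exact hi
      · exact (Finset.mem_erase.mp (hUs hxU)).2
    · rw [Finset.card_insert_of_notMem hiU, hUc]
      omega
  case left =>
    intro T hT
    simp only [Finset.mem_filter] at hT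
    exact Finset.insert_erase hT.2
  case right =>
    intro U hU
    rw [Finset.mem_powersetCard] at hU
    have hiU : i ∉ U := fun h => (Finset.mem_erase.mp (hU.1 h)).1 rfl
    exact Finset.erase_insert hiU

lemma sum_powersetCard_sum {ι : Type*} [DecidableEq ι] {M : Type*} [AddCommMonoid M]
    (s : Finset ι) {m : ℕ} (hm : 1 ≤ m) (g : ι → M) :
    ∑ T ∈ Finset.powersetCard m s, ∑ i ∈ T, g i
      = ((s.card - 1).choose (m - 1)) • ∑ i ∈ s, g i := by
  have h1 : ∀ T ∈ Finset.powersetCard m s, ∑ i ∈ T, g i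
      = ∑ i ∈ s, if i ∈ T then g i else 0 := by
    intro T hT
    rw [Finset.mem_powersetCard] at hT
    rw [Finset.sum_ite_mem, Finset.inter_eq_right.mpr hT.1]
  rw [Finset.sum_congr rfl h1, Finset.sum_comm, Finset.smul_sum]
  apply Finset.sum_congr rfl
  intro i hi
  rw [← Finset.sum_filter, Finset.sum_const, card_filter_mem_powersetCard s hi hm]

section Key

variable {K L : Set (EuclideanSpace ℝ (Fin n))} {m : ℕ}
variable (hKne : K.Nonempty) (hKcpt : IsCompact K)
variable (hLne : L.Nonempty) (hLcpt : IsCompact L)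

/-- Hypothesis: translated shadow covering, in support-function form. -/
def HC (K L : Set (EuclideanSpace ℝ (Fin n))) (m : ℕ) : Prop :=
  ∀ ξ : Submodule ℝ (EuclideanSpace ℝ (Fin n)), Module.finrank ℝ ξ = m →
    ∃ w : EuclideanSpace ℝ (Fin n), ∀ u ∈ ξ, hsup K u + ⟪w, u⟫ ≤ hsup L u

include hKne hKcpt hLne hLcpt

/-- Lemma A: for vectors spanning at most `m` dimensions. -/
lemma pairA (hcov : HC K L m) (hm : m ≤ n) {ι : Type*} (T : Finset ι) (v : ι → E)
    (hcard : T.card ≤ m) :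
    hsup K (-∑ i ∈ T, v i) + ∑ i ∈ T, hsup K (v i)
      ≤ hsup L (-∑ i ∈ T, v i) + ∑ i ∈ T, hsup L (v i) := by
  classical
  set V : Submodule ℝ E := Submodule.span ℝ (↑(T.image v) : Set E) with hV
  have hVrk : Module.finrank ℝ V ≤ m :=
    le_trans (finrank_span_finset_le_card (T.image v)) (le_trans (Finset.card_image_le) hcard)
  obtain ⟨ξ, hVξ, hξrk⟩ := exists_superspace V hVrk hm
  obtain ⟨w, hw⟩ := hcov ξ hξrk
  have hmem : ∀ i ∈ T, v i ∈ ξ := fun i hi =>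
    hVξ (Submodule.subset_span (by simp [Finset.coe_image]; exact ⟨i, hi, rfl⟩))
  have hsum : (-∑ i ∈ T, v i) ∈ ξ :=
    Submodule.neg_mem _ (Submodule.sum_mem _ hmem)
  have h1 := hw _ hsum
  have h2 : ∀ i ∈ T, hsup K (v i) + ⟪w, v i⟫ ≤ hsup L (v i) := fun i hi => hw _ (hmem i hi)
  have h3 : ∑ i ∈ T, (hsup K (v i) + ⟪w, v i⟫) ≤ ∑ i ∈ T, hsup L (v i) :=
    Finset.sum_le_sum h2
  rw [Finset.sum_add_distrib, ← inner_sum] at h3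
  have h4 : ⟪w, -∑ i ∈ T, v i⟫ + ⟪w, ∑ i ∈ T, v i⟫ = 0 := by
    rw [inner_neg_right]; ring
  linarith

/-- Base case: `n+1` vectors summing to zero. -/
lemma base_lemma (hcov : HC K L m) (hm1 : 1 ≤ m) (hmn : m ≤ n)
    (v : Fin (n + 1) → E) (hv : ∑ i, v i = 0) :
    ((n - 1).choose (m - 1) : ℝ) * ∑ i, hsup K (v i)
      ≤ (n.choose m : ℝ) * ∑ i, hsup L (v i) := by
  classical
  set O : Finset (Fin (n + 1)) := Finset.univ.erase 0 with hO
  have hOcard : O.card = n := by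
    rw [hO, Finset.card_erase_of_mem (Finset.mem_univ 0), Finset.card_univ, Fintype.card_fin]
    rfl
  have hOsum : ∑ i ∈ O, v i = -v 0 := by
    have := Finset.sum_erase_add Finset.univ v (Finset.mem_univ 0)
    rw [hv] at this
    linear_combination (norm := module) this
  set F := Finset.powersetCard m O with hF
  set r : ℕ := (n - 1).choose (m - 1) with hr
  set C : ℕ := n.choose m with hC
  -- per-T inequality
  have hT : ∀ T ∈ F, hsup K (-∑ i ∈ T, v i) + ∑ i ∈ T, hsup K (v i)
      ≤ hsup L (-∑ i ∈ T, v i) + ∑ i ∈ T, hsup L (v i) := by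
    intro T hTF
    rw [hF, Finset.mem_powersetCard] at hTF
    exact pairA hKne hKcpt hLne hLcpt hcov hmn T v (le_of_eq hTF.2)
  have hsumT := Finset.sum_le_sum hT
  rw [Finset.sum_add_distrib, Finset.sum_add_distrib] at hsumT
  -- counting identities
  have hcount : ∀ g : Fin (n+1) → ℝ, ∑ T ∈ F, ∑ i ∈ T, g i = (r : ℝ) * ∑ i ∈ O, g i := by
    intro g
    rw [hF, sum_powersetCard_sum O hm1 g, hOcard, nsmul_eq_mul]
  have hcountv : ∑ T ∈ F, ∑ i ∈ T, v i = (r : ℕ) • ∑ i ∈ O, v i := by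
    rw [hF, sum_powersetCard_sum O hm1 v, hOcard]
  have hcardF : F.card = C := by rw [hF, Finset.card_powersetCard, hOcard]
  -- lower bound for LHS
  have hK1 : (r : ℝ) * hsup K (v 0) ≤ ∑ T ∈ F, hsup K (-∑ i ∈ T, v i) := by
    have h0 : ∑ T ∈ F, (-∑ i ∈ T, v i) = (r : ℝ) • v 0 := by
      rw [Finset.sum_neg_distrib, hcountv, hOsum, ← Nat.cast_smul_eq_nsmul ℝ]
      module
    calc (r : ℝ) * hsup K (v 0) = hsup K ((r : ℝ) • v 0) :=
          (hsup_smul hKne hKcpt (by positivity) _).symm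
      _ = hsup K (∑ T ∈ F, (-∑ i ∈ T, v i)) := by rw [h0]
      _ ≤ ∑ T ∈ F, hsup K (-∑ i ∈ T, v i) := hsup_sum_le hKne hKcpt F _
  -- upper bound for RHS
  have hL1 : ∑ T ∈ F, hsup L (-∑ i ∈ T, v i)
      ≤ (C : ℝ) * hsup L (v 0) + ((C : ℝ) - r) * ∑ i ∈ O, hsup L (v i) := by
    have hper : ∀ T ∈ F, hsup L (-∑ i ∈ T, v i)
        ≤ hsup L (v 0) + ∑ i ∈ O \ T, hsup L (v i) := by
      intro T hTF
      rw [hF, Finset.mem_powersetCard] at hTF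
      have hsd : ∑ i ∈ O \ T, v i + ∑ i ∈ T, v i = ∑ i ∈ O, v i :=
        Finset.sum_sdiff hTF.1
      have hrw : -∑ i ∈ T, v i = v 0 + ∑ i ∈ O \ T, v i := by
        rw [hOsum] at hsd
        linear_combination (norm := module) - hsd
      rw [hrw]
      calc hsup L (v 0 + ∑ i ∈ O \ T, v i)
          ≤ hsup L (v 0) + hsup L (∑ i ∈ O \ T, v i) := hsup_add_le hLne hLcpt _ _
        _ ≤ hsup L (v 0) + ∑ i ∈ O \ T, hsup L (v i) := by
            linarith [hsup_sum_le hLne hLcpt (O \ T) v]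
    calc ∑ T ∈ F, hsup L (-∑ i ∈ T, v i)
        ≤ ∑ T ∈ F, (hsup L (v 0) + ∑ i ∈ O \ T, hsup L (v i)) := Finset.sum_le_sum hper
      _ = (C : ℝ) * hsup L (v 0) + ((C : ℝ) - r) * ∑ i ∈ O, hsup L (v i) := by
          rw [Finset.sum_add_distrib, Finset.sum_const, hcardF]
          have : ∀ T ∈ F, ∑ i ∈ O \ T, hsup L (v i)
              = ∑ i ∈ O, hsup L (v i) - ∑ i ∈ T, hsup L (v i) := by
            intro T hTF
            rw [hF, Finset.mem_powersetCard] at hTF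
            have h5 : (∑ i ∈ O \ T, hsup L (v i)) + ∑ i ∈ T, hsup L (v i)
                = ∑ i ∈ O, hsup L (v i) := Finset.sum_sdiff hTF.1
            linarith
          rw [Finset.sum_congr rfl this, Finset.sum_sub_distrib, Finset.sum_const, hcardF,
            hcount (fun i => hsup L (v i))]
          push_cast
          ring
  -- combine
  have hsplitK : ∑ i, hsup K (v i) = hsup K (v 0) + ∑ i ∈ O, hsup K (v i) := by
    rw [hO, ← Finset.sum_erase_add Finset.univ _ (Finset.mem_univ 0)]
    ring
  have hsplitL : ∑ i, hsup L (v i) = hsup L (v 0) + ∑ i ∈ O, hsup L (v i) := by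
    rw [hO, ← Finset.sum_erase_add Finset.univ _ (Finset.mem_univ 0)]
    ring
  have hKside := hcount (fun i => hsup K (v i))
  have hLside := hcount (fun i => hsup L (v i))
  have hid : n * r = C * m := by
    rw [hr, hC]
    have h := Nat.add_one_mul_choose_eq (n - 1) (m - 1)
    have h1 : n - 1 + 1 = n := by omega
    have h2 : m - 1 + 1 = m := by omega
    rwa [h1, h2] at h
  have hn1 : 1 ≤ n := le_trans hm1 hmn
  have hrC : (r : ℝ) ≤ C := by
    have h3 : n * r ≤ n * C := by
      calc n * r = C * m := hid
        _ ≤ C * n := Nat.mul_le_mul_left C hmn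
        _ = n * C := Nat.mul_comm _ _
    exact_mod_cast Nat.le_of_mul_le_mul_left h3 (by omega)
  rw [hsplitK, hsplitL]
  nlinarith [hsumT, hK1, hL1, hKside, hLside]

end Key

lemma sum_fin_lift {M : Type*} [AddCommMonoid M] {a b : ℕ} (h : a ≤ b) (ψ : Fin b → M)
    (hz : ∀ i : Fin b, a ≤ (i : ℕ) → ψ i = 0) :
    ∑ i, ψ i = ∑ j : Fin a, ψ (Fin.castLE h j) := by
  classical
  have h1 : ∑ i, ψ i = ∑ i ∈ Finset.univ.filter (fun i : Fin b => (i : ℕ) < a), ψ i :=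
    (Finset.sum_subset (Finset.filter_subset _ _)
      (fun x _ hx => hz x (by simpa using hx))).symm
  rw [h1]
  refine Finset.sum_bij' (fun i hi => (⟨(i : ℕ), by simpa using hi⟩ : Fin a))
    (fun j _ => Fin.castLE h j) ?_ ?_ ?_ ?_ ?_
  · intros; exact Finset.mem_univ _
  · intro j _
    simp [Fin.castLE]
  · intro i _
    rfl
  · intro j _
    rfl
  · intro i _
    rfl

section Key2

variable {K L : Set (EuclideanSpace ℝ (Fin n))} {m : ℕ}
variable (hKne : K.Nonempty) (hKcpt : IsCompact K)
variable (hLne : L.Nonempty) (hLcpt : IsCompact L)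

include hKne hKcpt hLne hLcpt

lemma base_mn (hcov : HC K L m) (hm1 : 1 ≤ m) (hmn : m ≤ n)
    (v : Fin (n + 1) → E) (hv : ∑ i, v i = 0) :
    (m : ℝ) * ∑ i, hsup K (v i) ≤ (n : ℝ) * ∑ i, hsup L (v i) := by
  have hb := base_lemma hKne hKcpt hLne hLcpt hcov hm1 hmn v hv
  set r : ℕ := (n - 1).choose (m - 1) with hr
  set C : ℕ := n.choose m with hC
  have hid : n * r = C * m := by
    rw [hr, hC]
    have h := Nat.add_one_mul_choose_eq (n - 1) (m - 1)
    have h1 : n - 1 + 1 = n := by omega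
    have h2 : m - 1 + 1 = m := by omega
    rwa [h1, h2] at h
  have hrpos : 0 < r := Nat.choose_pos (by omega)
  have hrpos' : (0 : ℝ) < r := by exact_mod_cast hrpos
  rw [← mul_le_mul_iff_right₀ hrpos']
  have hidR : (n : ℝ) * r = (C : ℝ) * m := by exact_mod_cast hid
  calc (r : ℝ) * ((m : ℝ) * ∑ i, hsup K (v i))
      = (m : ℝ) * ((r : ℝ) * ∑ i, hsup K (v i)) := by ring
    _ ≤ (m : ℝ) * ((C : ℝ) * ∑ i, hsup L (v i)) :=
        mul_le_mul_of_nonneg_left hb (by positivity)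
    _ = (r : ℝ) * ((n : ℝ) * ∑ i, hsup L (v i)) := by
        have h9 : (m : ℝ) * (C : ℝ) = (r : ℝ) * (n : ℝ) := by linarith
        calc (m : ℝ) * ((C : ℝ) * ∑ i, hsup L (v i))
            = ((m : ℝ) * (C : ℝ)) * ∑ i, hsup L (v i) := by ring
          _ = ((r : ℝ) * (n : ℝ)) * ∑ i, hsup L (v i) := by rw [h9]
          _ = (r : ℝ) * ((n : ℝ) * ∑ i, hsup L (v i)) := by ring

lemma key_ineq (hcov : HC K L m) (hm1 : 1 ≤ m) (hmn : m ≤ n) :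
    ∀ N (v : Fin N → E), ∑ i, v i = 0 →
      (m : ℝ) * ∑ i, hsup K (v i) ≤ (n : ℝ) * ∑ i, hsup L (v i) := by
  intro N
  induction N using Nat.strong_induction_on with
  | _ N ih =>
  intro v hv
  rcases le_or_gt N (n + 1) with hN | hN
  · -- pad to a `Fin (n+1)` tuple
    have hle : N ≤ n + 1 := hN
    set w : Fin (n + 1) → E := fun j => if h : (j : ℕ) < N then v ⟨(j : ℕ), h⟩ else 0 with hw
    have hwz : ∀ j : Fin (n + 1), N ≤ (j : ℕ) → w j = 0 := by
      intro j hj; simp only [hw]; rw [dif_neg (by omega)]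
    have hww : ∀ j : Fin N, w (Fin.castLE hle j) = v j := by
      intro j
      simp only [hw, Fin.castLE]
      rw [dif_pos j.isLt]
    have hsum : ∑ j, w j = 0 := by
      rw [sum_fin_lift hle w hwz]
      rw [Finset.sum_congr rfl fun j _ => hww j]
      exact hv
    have hb := base_mn hKne hKcpt hLne hLcpt hcov hm1 hmn w hsum
    have hKsum : ∑ j, hsup K (w j) = ∑ i, hsup K (v i) := by
      rw [sum_fin_lift hle (fun j => hsup K (w j)) (fun j hj => by
        show hsup K (w j) = 0
        rw [hwz j hj, hsup_zero hKne hKcpt])]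
      exact Finset.sum_congr rfl fun j _ => by
        show hsup K (w (Fin.castLE hle j)) = hsup K (v j)
        rw [hww j]
    have hLsum : ∑ j, hsup L (w j) = ∑ i, hsup L (v i) := by
      rw [sum_fin_lift hle (fun j => hsup L (w j)) (fun j hj => by
        show hsup L (w j) = 0
        rw [hwz j hj, hsup_zero hLne hLcpt])]
      exact Finset.sum_congr rfl fun j _ => by
        show hsup L (w (Fin.castLE hle j)) = hsup L (v j)
        rw [hww j]
    rwa [hKsum, hLsum] at hb
  · -- N ≥ n + 2 : reduction step
    -- helper: induction hypothesis for tuples with a vanishing entry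
    have ihz : ∀ w : Fin N → E, (∃ i0, w i0 = 0) → ∑ i, w i = 0 →
        (m : ℝ) * ∑ i, hsup K (w i) ≤ (n : ℝ) * ∑ i, hsup L (w i) := by
      rintro w ⟨i0, h0⟩ hs
      obtain ⟨M, rfl⟩ : ∃ M, N = M + 1 := ⟨N - 1, by omega⟩
      have hs' : ∑ i : Fin M, w (i0.succAbove i) = 0 := by
        rw [Fin.sum_univ_succAbove w i0, h0, zero_add] at hs
        exact hs
      have := ih M (by omega) (fun i => w (i0.succAbove i)) hs'
      rw [Fin.sum_univ_succAbove (fun i => hsup K (w i)) i0,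
        Fin.sum_univ_succAbove (fun i => hsup L (w i)) i0, h0,
        hsup_zero hKne hKcpt, hsup_zero hLne hLcpt, zero_add, zero_add]
      exact this
    have hle : n + 1 ≤ N := by omega
    -- a nontrivial dependence among the first n+1 vectors
    obtain ⟨g, hg, j0, hj0⟩ : ∃ g : Fin (n + 1) → ℝ,
        ∑ j, g j • v (Fin.castLE hle j) = 0 ∧ ∃ j0, g j0 ≠ 0 := by
      rw [← Fintype.not_linearIndependent_iff]
      intro hli
      have := LinearIndependent.fintype_card_le_finrank hli
      rw [Fintype.card_fin, finrank_euclideanSpace_fin] at this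
      omega
    -- extend the dependence coefficients, with a positive entry
    obtain ⟨μ, hμsum, hμpos, hμout⟩ : ∃ μ : Fin N → ℝ,
        (∑ i, μ i • v i = 0) ∧ (∃ i, 0 < μ i) ∧
          (∀ i : Fin N, n + 1 ≤ (i : ℕ) → μ i = 0) := by
      have hcase : ∀ (g' : Fin (n+1) → ℝ), (∑ j, g' j • v (Fin.castLE hle j) = 0) →
          ∃ μ : Fin N → ℝ, (∑ i, μ i • v i = 0) ∧
            (∀ j : Fin (n+1), μ (Fin.castLE hle j) = g' j) ∧
            (∀ i : Fin N, n + 1 ≤ (i : ℕ) → μ i = 0) := by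
        intro g' hg'
        refine ⟨fun i => if h : (i : ℕ) < n + 1 then g' ⟨(i : ℕ), h⟩ else 0, ?_, ?_, ?_⟩
        · rw [sum_fin_lift hle
            (fun i => (if h : (i : ℕ) < n + 1 then g' ⟨(i : ℕ), h⟩ else 0) • v i)
            (fun i hi => by
              show (if h : (i : ℕ) < n + 1 then g' ⟨(i : ℕ), h⟩ else 0) • v i = 0
              rw [dif_neg (by omega), zero_smul])]
          rw [← hg']
          refine Finset.sum_congr rfl fun j _ => ?_
          show (if h : ((Fin.castLE hle j : Fin N) : ℕ) < n + 1
              then g' ⟨((Fin.castLE hle j : Fin N) : ℕ), h⟩ else 0) • v (Fin.castLE hle j)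
            = g' j • v (Fin.castLE hle j)
          simp only [dif_pos (show ((Fin.castLE hle j : Fin N) : ℕ) < n + 1 from j.isLt)]
          rfl
        · intro j
          show (if h : ((Fin.castLE hle j : Fin N) : ℕ) < n + 1
              then g' ⟨((Fin.castLE hle j : Fin N) : ℕ), h⟩ else 0) = g' j
          simp only [dif_pos (show ((Fin.castLE hle j : Fin N) : ℕ) < n + 1 from j.isLt)]
          rfl
        · intro i hi
          show (if h : (i : ℕ) < n + 1 then g' ⟨(i : ℕ), h⟩ else 0) = 0
          rw [dif_neg (by omega)]
      rcases lt_trichotomy (g j0) 0 with hneg | hzero | hpos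
      · obtain ⟨μ, h1, h2, h3⟩ := hcase (fun j => -g j) (by
          simpa [neg_smul, Finset.sum_neg_distrib] using congrArg Neg.neg hg)
        exact ⟨μ, h1, ⟨Fin.castLE hle j0, by rw [h2 j0]; linarith⟩, h3⟩
      · exact absurd hzero hj0
      · obtain ⟨μ, h1, h2, h3⟩ := hcase g hg
        exact ⟨μ, h1, ⟨Fin.castLE hle j0, by rw [h2 j0]; exact hpos⟩, h3⟩
    -- the positive threshold t
    classical
    set S : Finset (Fin N) := Finset.univ.filter (fun i => 0 < μ i) with hS
    have hSne : S.Nonempty := by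
      obtain ⟨i, hi⟩ := hμpos
      exact ⟨i, by simp [hS, hi]⟩
    set t : ℝ := S.inf' hSne (fun i => (μ i)⁻¹) with ht
    have htpos : 0 < t := by
      rw [ht, Finset.lt_inf'_iff]
      intro i hi
      rw [hS, Finset.mem_filter] at hi
      exact inv_pos.mpr hi.2
    have hcoef : ∀ i, 0 ≤ 1 - t * μ i := by
      intro i
      rcases le_or_gt (μ i) 0 with h | h
      · nlinarith
      · have hiS : i ∈ S := by simp [hS, h]
        have := Finset.inf'_le (fun i => (μ i)⁻¹) hiS
        rw [← ht] at this
        have : t * μ i ≤ (μ i)⁻¹ * μ i := mul_le_mul_of_nonneg_right this h.le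
        rw [inv_mul_cancel₀ h.ne'] at this
        linarith
    obtain ⟨i0, hi0S, hi0⟩ := Finset.exists_mem_eq_inf' hSne (fun i => (μ i)⁻¹)
    have hμi0 : 0 < μ i0 := by
      rw [hS, Finset.mem_filter] at hi0S
      exact hi0S.2
    have hzero0 : 1 - t * μ i0 = 0 := by
      rw [ht, hi0, inv_mul_cancel₀ hμi0.ne']
      ring
    have hsmulK : ∀ (c : ℝ), 0 ≤ c → ∀ x : E, hsup K (c • x) = c * hsup K x :=
      fun c hc x => hsup_smul hKne hKcpt hc x
    have hsmulL : ∀ (c : ℝ), 0 ≤ c → ∀ x : E, hsup L (c • x) = c * hsup L x :=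
      fun c hc x => hsup_smul hLne hLcpt hc x
    by_cases hneg : ∃ i1, μ i1 < 0
    · -- Case A : mixed signs
      obtain ⟨i1, hi1⟩ := hneg
      set T : Finset (Fin N) := Finset.univ.filter (fun i => μ i < 0) with hTd
      have hTne : T.Nonempty := ⟨i1, by simp [hTd, hi1]⟩
      set t' : ℝ := T.sup' hTne (fun i => (μ i)⁻¹) with ht'
      have ht'neg : t' < 0 := by
        rw [ht', Finset.sup'_lt_iff]
        intro i hi
        rw [hTd, Finset.mem_filter] at hi
        exact inv_neg''.mpr hi.2
      have hcoef' : ∀ i, 0 ≤ 1 - t' * μ i := by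
        intro i
        rcases lt_trichotomy (μ i) 0 with h | h | h
        · have hiT : i ∈ T := by simp [hTd, h]
          have hle' := Finset.le_sup' (fun i => (μ i)⁻¹) hiT
          rw [← ht'] at hle'
          have h2 : t' * μ i ≤ (μ i)⁻¹ * μ i := mul_le_mul_of_nonpos_right hle' h.le
          rw [inv_mul_cancel₀ h.ne] at h2
          linarith
        · rw [h]; simp
        · nlinarith
      obtain ⟨i1', hi1'T, hi1'⟩ := Finset.exists_mem_eq_sup' hTne (fun i => (μ i)⁻¹)
      have hμi1' : μ i1' < 0 := by rw [hTd, Finset.mem_filter] at hi1'T; exact hi1'T.2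
      have hzero1 : 1 - t' * μ i1' = 0 := by
        rw [ht', hi1', inv_mul_cancel₀ hμi1'.ne]
        ring
      have hasum : ∑ i, (1 - t * μ i) • v i = 0 := by
        have h1 : ∀ i : Fin N, (1 - t * μ i) • v i = v i - t • (μ i • v i) := fun i => by
          module
        rw [Finset.sum_congr rfl fun i _ => h1 i, Finset.sum_sub_distrib, hv,
          ← Finset.smul_sum, hμsum, smul_zero, sub_zero]
      have ha'sum : ∑ i, (1 - t' * μ i) • v i = 0 := by
        have h1 : ∀ i : Fin N, (1 - t' * μ i) • v i = v i - t' • (μ i • v i) := fun i => by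
          module
        rw [Finset.sum_congr rfl fun i _ => h1 i, Finset.sum_sub_distrib, hv,
          ← Finset.smul_sum, hμsum, smul_zero, sub_zero]
      have hA : (m : ℝ) * ∑ i, hsup K ((1 - t * μ i) • v i)
          ≤ (n : ℝ) * ∑ i, hsup L ((1 - t * μ i) • v i) :=
        ihz (fun i => (1 - t * μ i) • v i)
          ⟨i0, show (1 - t * μ i0) • v i0 = 0 by rw [hzero0, zero_smul]⟩ hasum
      have hA' : (m : ℝ) * ∑ i, hsup K ((1 - t' * μ i) • v i)
          ≤ (n : ℝ) * ∑ i, hsup L ((1 - t' * μ i) • v i) :=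
        ihz (fun i => (1 - t' * μ i) • v i)
          ⟨i1', show (1 - t' * μ i1') • v i1' = 0 by rw [hzero1, zero_smul]⟩ ha'sum
      set α : ℝ := (-t') / (t - t') with hα
      set β : ℝ := t / (t - t') with hβ
      have htt' : 0 < t - t' := by linarith
      have hα0 : 0 ≤ α := div_nonneg (by linarith) htt'.le
      have hβ0 : 0 ≤ β := div_nonneg htpos.le htt'.le
      have hptK : ∀ i, hsup K (v i)
          = α * hsup K ((1 - t * μ i) • v i) + β * hsup K ((1 - t' * μ i) • v i) := by
        intro i
        rw [hsmulK _ (hcoef i), hsmulK _ (hcoef' i)]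
        rw [hα, hβ]
        field_simp
        ring
      have hptL : ∀ i, hsup L (v i)
          = α * hsup L ((1 - t * μ i) • v i) + β * hsup L ((1 - t' * μ i) • v i) := by
        intro i
        rw [hsmulL _ (hcoef i), hsmulL _ (hcoef' i)]
        rw [hα, hβ]
        field_simp
        ring
      have hKsum : ∑ i, hsup K (v i)
          = α * (∑ i, hsup K ((1 - t * μ i) • v i))
            + β * (∑ i, hsup K ((1 - t' * μ i) • v i)) := by
        rw [Finset.mul_sum, Finset.mul_sum, ← Finset.sum_add_distrib]
        exact Finset.sum_congr rfl fun i _ => hptK i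
      have hLsum : ∑ i, hsup L (v i)
          = α * (∑ i, hsup L ((1 - t * μ i) • v i))
            + β * (∑ i, hsup L ((1 - t' * μ i) • v i)) := by
        rw [Finset.mul_sum, Finset.mul_sum, ← Finset.sum_add_distrib]
        exact Finset.sum_congr rfl fun i _ => hptL i
      rw [hKsum, hLsum]
      have h1 := mul_le_mul_of_nonneg_left hA hα0
      have h2 := mul_le_mul_of_nonneg_left hA' hβ0
      linarith only [h1, h2]
    · -- Case B : all coefficients nonnegative
      have hneg' : ∀ i, 0 ≤ μ i := fun i => le_of_not_gt (fun h => hneg ⟨i, h⟩)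
      have hasum : ∑ i, (1 - t * μ i) • v i = 0 := by
        have h1 : ∀ i : Fin N, (1 - t * μ i) • v i = v i - t • (μ i • v i) := fun i => by
          module
        rw [Finset.sum_congr rfl fun i _ => h1 i, Finset.sum_sub_distrib, hv,
          ← Finset.smul_sum, hμsum, smul_zero, sub_zero]
      have hA : (m : ℝ) * ∑ i, hsup K ((1 - t * μ i) • v i)
          ≤ (n : ℝ) * ∑ i, hsup L ((1 - t * μ i) • v i) :=
        ihz (fun i => (1 - t * μ i) • v i)
          ⟨i0, show (1 - t * μ i0) • v i0 = 0 by rw [hzero0, zero_smul]⟩ hasum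
      have hB : (m : ℝ) * ∑ i, hsup K (μ i • v i)
          ≤ (n : ℝ) * ∑ i, hsup L (μ i • v i) := by
        refine ihz (fun i => μ i • v i) ⟨⟨n + 1, by omega⟩, ?_⟩ hμsum
        show μ (⟨n + 1, by omega⟩ : Fin N) • v (⟨n + 1, by omega⟩ : Fin N) = 0
        rw [hμout _ le_rfl, zero_smul]
      have hptK : ∀ i, hsup K (v i)
          = hsup K ((1 - t * μ i) • v i) + t * hsup K (μ i • v i) := by
        intro i
        rw [hsmulK _ (hcoef i), hsmulK _ (hneg' i)]
        ring
      have hptL : ∀ i, hsup L (v i)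
          = hsup L ((1 - t * μ i) • v i) + t * hsup L (μ i • v i) := by
        intro i
        rw [hsmulL _ (hcoef i), hsmulL _ (hneg' i)]
        ring
      have hKsum : ∑ i, hsup K (v i)
          = (∑ i, hsup K ((1 - t * μ i) • v i)) + t * (∑ i, hsup K (μ i • v i)) := by
        rw [Finset.mul_sum, ← Finset.sum_add_distrib]
        exact Finset.sum_congr rfl fun i _ => hptK i
      have hLsum : ∑ i, hsup L (v i)
          = (∑ i, hsup L ((1 - t * μ i) • v i)) + t * (∑ i, hsup L (μ i • v i)) := by
        rw [Finset.mul_sum, ← Finset.sum_add_distrib]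
        exact Finset.sum_congr rfl fun i _ => hptL i
      rw [hKsum, hLsum]
      have h2 := mul_le_mul_of_nonneg_left hB htpos.le
      linarith only [hA, h2]

end Key2

section HB

variable {K L : Set (EuclideanSpace ℝ (Fin n))} {m : ℕ}
variable (hKne : K.Nonempty) (hKcpt : IsCompact K)
variable (hLne : L.Nonempty) (hLcpt : IsCompact L)

include hKne hKcpt hLne hLcpt

lemma exists_translate (hcov : HC K L m) (hm1 : 1 ≤ m) (hmn : m ≤ n) :
    ∃ x : EuclideanSpace ℝ (Fin n), ∀ u : EuclideanSpace ℝ (Fin n),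
      (m : ℝ) * hsup K u + ⟪x, u⟫ ≤ (n : ℝ) * hsup L u := by
  classical
  set F : E → ℝ := fun y => (n : ℝ) * hsup L y - (m : ℝ) * hsup K y with hF
  have hF0 : F 0 = 0 := by
    rw [hF]
    simp [hsup_zero hKne hKcpt, hsup_zero hLne hLcpt]
  have hFsmul : ∀ (c : ℝ), 0 ≤ c → ∀ y : E, F (c • y) = c * F y := by
    intro c hc y
    rw [hF]
    simp only
    rw [hsup_smul hKne hKcpt hc, hsup_smul hLne hLcpt hc]
    ring
  have hkey : ∀ (N : ℕ) (w : Fin N → E), ∑ i, w i = 0 → 0 ≤ ∑ i, F (w i) := by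
    intro N w hw
    have := key_ineq hKne hKcpt hLne hLcpt hcov hm1 hmn N w hw
    have h2 : ∑ i, F (w i)
        = (n : ℝ) * ∑ i, hsup L (w i) - (m : ℝ) * ∑ i, hsup K (w i) := by
      rw [hF, Finset.mul_sum, Finset.mul_sum, ← Finset.sum_sub_distrib]
    linarith [h2]
  set pS : E → Set ℝ := fun y =>
    {r | ∃ (N : ℕ) (w : Fin N → E), ∑ i, w i = y ∧ r = ∑ i, F (w i)} with hpS
  have hmemF : ∀ y : E, F y ∈ pS y := by
    intro y
    exact ⟨1, fun _ => y, by simp, by simp⟩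
  have hlb : ∀ y : E, ∀ r ∈ pS y, -F (-y) ≤ r := by
    rintro y r ⟨N, w, hws, rfl⟩
    set w' : Fin (N + 1) → E := Fin.cons (-y) w with hw'
    have hcons : ∀ g : E → ℝ, ∑ i : Fin (N + 1), g (w' i)
        = g (-y) + ∑ i, g (w i) := by
      intro g
      rw [Fin.sum_univ_succ]
      simp [hw', Fin.cons_succ]
    have hsum0 : ∑ i : Fin (N + 1), w' i = 0 := by
      rw [Fin.sum_univ_succ]
      simp only [hw', Fin.cons_zero, Fin.cons_succ]
      rw [hws]
      abel
    have h0 := hkey (N + 1) w' hsum0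
    have h1 : ∑ i : Fin (N + 1), F (w' i) = F (-y) + ∑ i, F (w i) := hcons F
    linarith [h0, h1]
  have hne : ∀ y : E, (pS y).Nonempty := fun y => ⟨F y, hmemF y⟩
  have hbdd : ∀ y : E, BddBelow (pS y) := fun y => ⟨-F (-y), fun r hr => hlb y r hr⟩
  set p : E → ℝ := fun y => sInf (pS y) with hp
  have hpleF : ∀ y : E, p y ≤ F y := fun y => csInf_le (hbdd y) (hmemF y)
  have hp0 : 0 ≤ p 0 := by
    apply le_csInf (hne 0)
    intro r hr
    have := hlb 0 r hr
    simp only [neg_zero, hF0] at this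
    linarith
  -- subadditivity
  have hpadd : ∀ x y : E, p (x + y) ≤ p x + p y := by
    intro x y
    have hstep : ∀ a ∈ pS x, ∀ b ∈ pS y, p (x + y) ≤ a + b := by
      rintro a ⟨Na, wa, hwa, rfl⟩ b ⟨Nb, wb, hwb, rfl⟩
      apply csInf_le (hbdd _)
      refine ⟨Na + Nb, Fin.append wa wb, ?_, ?_⟩
      · rw [Fin.sum_univ_add]
        simp only [Fin.append_left, Fin.append_right]
        rw [hwa, hwb]
      · rw [Fin.sum_univ_add]
        simp only [Fin.append_left, Fin.append_right]
    have h1 : ∀ a ∈ pS x, p (x + y) - a ≤ p y := by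
      intro a ha
      apply le_csInf (hne y)
      intro b hb
      linarith [hstep a ha b hb]
    have h2 : p (x + y) - p y ≤ p x := by
      apply le_csInf (hne x)
      intro a ha
      linarith [h1 a ha]
    linarith
  -- positive homogeneity
  have hphomle : ∀ (c : ℝ), 0 < c → ∀ y : E, p (c • y) ≤ c * p y := by
    intro c hc y
    rw [← div_le_iff₀' hc]
    apply le_csInf (hne y)
    rintro r ⟨N, w, hws, rfl⟩
    rw [div_le_iff₀' hc]
    apply csInf_le (hbdd _)
    refine ⟨N, fun i => c • w i, ?_, ?_⟩
    · rw [← Finset.smul_sum, hws]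
    · rw [Finset.mul_sum]
      exact Finset.sum_congr rfl fun i _ => (hFsmul c hc.le (w i)).symm
  have hphom : ∀ (c : ℝ), 0 < c → ∀ y : E, p (c • y) = c * p y := by
    intro c hc y
    refine le_antisymm (hphomle c hc y) ?_
    have := hphomle c⁻¹ (inv_pos.mpr hc) (c • y)
    rw [smul_smul, inv_mul_cancel₀ hc.ne', one_smul] at this
    calc c * p y ≤ c * (c⁻¹ * p (c • y)) := mul_le_mul_of_nonneg_left this hc.le
      _ = p (c • y) := by field_simp
  -- Hahn-Banach
  obtain ⟨g, -, hg⟩ := exists_extension_of_le_sublinear ⟨⊥, 0⟩ p hphom hpadd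
    (by
      rintro ⟨x, hx⟩
      have hx0 : x = 0 := by simpa using hx
      simp only [hx0]
      simpa using hp0)
  refine ⟨(InnerProductSpace.toDual ℝ (EuclideanSpace ℝ (Fin n))).symm
    (LinearMap.toContinuousLinearMap g), fun u => ?_⟩
  have hgu : ⟪(InnerProductSpace.toDual ℝ (EuclideanSpace ℝ (Fin n))).symm
      (LinearMap.toContinuousLinearMap g), u⟫ = g u := InnerProductSpace.toDual_symm_apply
  rw [hgu]
  have := (hg u).trans (hpleF u)
  rw [hF] at this
  simp only at this
  linarith

end HB

/-- if every `(n-d)`-dimensional shadow of `L` contains a translate of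
the corresponding shadow of `K`, then a translate of `K` lies in `(n/(n-d)) • L`. -/
theorem shadow_covering_containment_codim {n d : ℕ} (hd1 : 1 ≤ d) (hdn : d < n)
    (K L : Set (EuclideanSpace ℝ (Fin n)))
    (hKne : K.Nonempty) (hKcpt : IsCompact K) (hKcv : Convex ℝ K)
    (hLne : L.Nonempty) (hLcpt : IsCompact L) (hLcv : Convex ℝ L)
    (hcov : ∀ ξ : Submodule ℝ (EuclideanSpace ℝ (Fin n)),
      Module.finrank ℝ ξ = n - d →
      ∃ w ∈ ξ, (fun y => y + w) '' projSub ξ K ⊆ projSub ξ L) :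
    ∃ x : EuclideanSpace ℝ (Fin n),
      (fun y => y + x) '' K ⊆ ((n : ℝ) / ((n : ℝ) - (d : ℝ))) • L := by
  set m : ℕ := n - d with hm
  have hm1 : 1 ≤ m := by omega
  have hmn : m ≤ n := by omega
  have hmR : (m : ℝ) = (n : ℝ) - (d : ℝ) := by
    rw [hm]
    exact_mod_cast Nat.cast_sub hdn.le
  have hmRpos : (0 : ℝ) < (m : ℝ) := by
    have : 0 < m := hm1
    exact_mod_cast this
  -- support function form of the covering hypothesis
  have hHC : HC K L m := by
    intro ξ hξ
    obtain ⟨w, hwξ, hsub⟩ := hcov ξ hξ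
    exact ⟨w, fun u hu => hsup_shadow_le hKne hKcpt hLne hLcpt hsub hu⟩
  obtain ⟨x, hx⟩ := exists_translate hKne hKcpt hLne hLcpt hHC hm1 hmn
  set c : ℝ := (n : ℝ) / ((n : ℝ) - (d : ℝ)) with hc
  have hcpos : 0 < c := by
    rw [hc, ← hmR]
    have hn0 : (0 : ℝ) < (n : ℝ) := by
      have : 0 < n := by omega
      exact_mod_cast this
    positivity
  refine ⟨(m : ℝ)⁻¹ • x, ?_⟩
  rintro _ ⟨y, hy, rfl⟩
  refine mem_of_inner_le_hsup (hLne.smul_set) (hLcpt.smul c) (hLcv.smul c) fun u => ?_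
  rw [hsup_smulset hLne hLcpt hcpos u]
  have h1 : ⟪y + (m : ℝ)⁻¹ • x, u⟫ = ⟪y, u⟫ + (m : ℝ)⁻¹ * ⟪x, u⟫ := by
    rw [inner_add_left, real_inner_smul_left]
  have h2 : ⟪y, u⟫ ≤ hsup K u := inner_le_hsup hKcpt hy u
  have h3 := hx u
  have h4 : c = (n : ℝ) / (m : ℝ) := by rw [hc, hmR]
  rw [h1, h4, div_mul_eq_mul_div, le_div_iff₀ hmRpos]
  have h5 : (⟪y, u⟫ + (m : ℝ)⁻¹ * ⟪x, u⟫) * (m : ℝ) = ⟪y, u⟫ * (m : ℝ) + ⟪x, u⟫ := by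
    field_simp
  rw [h5]
  have h6 := mul_le_mul_of_nonneg_right h2 hmRpos.le
  linarith [h6, h3]
end
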